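/- arXiv:2410.09899 — 2 statements merged into one kernel-verified Lean document; each statement's English description precedes it below -/
import Mathlib

section
/- Let (𝔛, !𝔅, *ℭ, !*ℌ) be a fan quadruple, 𝒪 a strict total order on a subset 𝔈 = {ξ₁ < … < ξ_m} ⊆ 𝔅 ∪ ℭ ∪ ℌ, and let 𝔛₀ = 𝔛, 𝔛_i = 𝔛_{i−1}*(ξ_{m−i+1}) be the associated sequence of star subdivisions with induced quadruples; set 𝔈_i = {ξ_{m−i+1}, …, ξ_m}. Then the i-th step 𝔛_i → 𝔛_{i−1} is locally-convex with respect to the induced quadruple on 𝔛_i if and only if for every 𝔈_{i−1}-unsettled cone ζ ∈ 𝔛, the collection of cones of 𝔛_i contained in ζ, with the induced quadruple, is a convex subdivision of the affine fan of ζ. (Here one uses that the 𝔈_{i−1}-unsettled cones of 𝔛 coincide with the 𝔈_{i−1}-unsettled cones of 𝔛_{i−1}.) -/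
namespace ToricPaper

open scoped BigOperators

/-- The ambient space `N_ℚ = ℚ^n`. -/
abbrev V (n : ℕ) := Fin n → ℚ

variable {n : ℕ}

/-- The cone of nonnegative rational combinations of elements of `A`. -/
def coneHull (A : Set (V n)) : Set (V n) :=
  {x | ∃ t : Finset (V n), ↑t ⊆ A ∧ ∃ c : V n → ℚ,
    (∀ v ∈ t, 0 ≤ c v) ∧ x = ∑ v ∈ t, c v • v}

/-- A rational polyhedral cone: the cone generated by finitely many vectors. -/
def IsPolyCone (σ : Set (V n)) : Prop := ∃ S : Finset (V n), σ = coneHull (S : Set (V n))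

/-- A cone is strongly convex if it contains no line. -/
def StronglyConvex (σ : Set (V n)) : Prop := ∀ x ∈ σ, -x ∈ σ → x = 0

/-- `F` is a face of `σ`, cut out by a linear functional nonnegative on `σ`. -/
def IsFaceOf (F σ : Set (V n)) : Prop :=
  ∃ m : (V n) →ₗ[ℚ] ℚ, (∀ x ∈ σ, 0 ≤ m x) ∧ F = {x ∈ σ | m x = 0}

/-- Dimension of a cone: the rank of its linear span. -/
noncomputable def coneDim (σ : Set (V n)) : ℕ := Module.finrank ℚ (Submodule.span ℚ σ)

/-- A ray of a cone is a one-dimensional face. -/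
def IsRayOf (ν σ : Set (V n)) : Prop := IsFaceOf ν σ ∧ coneDim ν = 1

/-- An abstract ray: a one-dimensional strongly convex rational polyhedral cone. -/
def IsRay (ν : Set (V n)) : Prop := IsPolyCone ν ∧ StronglyConvex ν ∧ coneDim ν = 1

/-- All faces of a cone `τ` (the affine fan induced by `τ`). -/
def faces (τ : Set (V n)) : Set (Set (V n)) := {F | IsFaceOf F τ}

/-- The rays of a cone `τ`. -/
def raysOf (τ : Set (V n)) : Set (Set (V n)) := {ν | IsRayOf ν τ}

/-- A fan: a finite collection of strongly convex rational polyhedral cones, closed under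
taking faces, such that the intersection of two cones is a face of each. -/
def IsFan (X : Set (Set (V n))) : Prop :=
  X.Finite ∧ (∀ σ ∈ X, IsPolyCone σ ∧ StronglyConvex σ) ∧
  (∀ σ ∈ X, ∀ F, IsFaceOf F σ → F ∈ X) ∧
  (∀ σ ∈ X, ∀ σ' ∈ X, IsFaceOf (σ ∩ σ') σ ∧ IsFaceOf (σ ∩ σ') σ')

/-- The rays (one-dimensional cones) belonging to a collection of cones. -/
def raysIn (X : Set (Set (V n))) : Set (Set (V n)) := {ν | ν ∈ X ∧ coneDim ν = 1}

/-- The support of a collection of cones. -/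
def support (X : Set (Set (V n))) : Set (V n) := ⋃₀ X

/-- The data of a fan quadruple `(X, !B, *C, !*H)`: three pairwise disjoint sets of rays. -/
def IsQuadData (X B C H : Set (Set (V n))) : Prop :=
  B ⊆ raysIn X ∧ C ⊆ raysIn X ∧ H ⊆ raysIn X ∧ Disjoint B C ∧ Disjoint B H ∧ Disjoint C H

/-- The data of a fan triple `(X, !B, *C)`: two disjoint sets of rays. -/
def IsTripleData (X B C : Set (Set (V n))) : Prop :=
  B ⊆ raysIn X ∧ C ⊆ raysIn X ∧ Disjoint B C

/-- `ρ` is a sorting function for the (restricted) quadruple on the faces of `ξ`: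
nonnegative on rays of `ξ` in `B`, nonpositive on rays of `ξ` in `C`, zero on rays of `ξ`
in none of `B`, `C`, `H`. -/
def IsSortingOn (ξ : Set (V n)) (B C H : Set (Set (V n))) (ρ : (V n) →ₗ[ℚ] ℚ) : Prop :=
  (∀ ν, IsRayOf ν ξ → ν ∈ B → ∀ x ∈ ν, 0 ≤ ρ x) ∧
  (∀ ν, IsRayOf ν ξ → ν ∈ C → ∀ x ∈ ν, ρ x ≤ 0) ∧
  (∀ ν, IsRayOf ν ξ → ν ∉ B → ν ∉ C → ν ∉ H → ∀ x ∈ ν, ρ x = 0)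

/-- The (restricted) affine quadruple on the faces of `ξ` admits a `Cf`-strict sorting
function: a sorting function which is moreover negative on `ν ∖ {0}` for every `ν ∈ Cf`. -/
def HasStrictSortingOn (ξ : Set (V n)) (B C H Cf : Set (Set (V n))) : Prop :=
  ∃ ρ : (V n) →ₗ[ℚ] ℚ, IsSortingOn ξ B C H ρ ∧
    ∀ ν, IsRayOf ν ξ → ν ∈ Cf → ∀ x ∈ ν, x ≠ 0 → ρ x < 0

/-- A cone `ξ` is `E`-unsettled if no ray of `ξ` lies in `E`. -/
def Unsettled (E : Set (Set (V n))) (ξ : Set (V n)) : Prop := ∀ ν, IsRayOf ν ξ → ν ∉ E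

/-- The quadruple `(X, !B, *C, !*H)` is `(Bs, Cf, Hs)`-sorted. -/
def SortedOn (X B C H Bs Cf Hs : Set (Set (V n))) : Prop :=
  ∀ ξ ∈ X, Unsettled ((B \ Bs) ∪ (H \ Hs)) ξ → HasStrictSortingOn ξ B C H Cf

/-- Partially-sorted: `(∅, C, ∅)`-sorted. -/
def PartiallySortedOn (X B C H : Set (Set (V n))) : Prop := SortedOn X B C H ∅ C ∅

/-- Well-sorted: `(B, C, H)`-sorted. -/
def WellSortedOn (X B C H : Set (Set (V n))) : Prop := SortedOn X B C H B C H

/-- A simplicial cone is generated by linearly independent vectors. -/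
def IsSimplicialCone (σ : Set (V n)) : Prop :=
  ∃ S : Finset (V n), LinearIndependent ℚ (fun v : S => (v : V n)) ∧
    σ = coneHull (S : Set (V n))

/-- A collection of cones is `E`-simplicial: every cone having a ray of `E` as a face is the
join of that ray with a cone of the collection of one less dimension. -/
def ESimplicialOn (X E : Set (Set (V n))) : Prop :=
  ∀ ν ∈ E, ∀ σ ∈ X, IsFaceOf ν σ →
    ∃ ζ ∈ X, σ = coneHull (ζ ∪ ν) ∧ coneDim σ = coneDim ζ + 1

/-- A subdivision of a fan: a fan with the same support, every cone of which is contained in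
a cone of the base. -/
def IsSubdivision (X' X : Set (Set (V n))) : Prop :=
  IsFan X' ∧ support X' = support X ∧ ∀ σ' ∈ X', ∃ σ ∈ X, σ' ⊆ σ

/-- A subdivision is efficient if it introduces no new rays. -/
def IsEfficient (X' X : Set (Set (V n))) : Prop := raysIn X' = raysIn X

/-- `ψ` is a good (convex piecewise-linear) function for the subdivision `X'` relative to the
cones of the base fan `X`: on each cone `τ` of `X`, `ψ` is convex, linear on each cone of
`X'` contained in `τ`, and the maximal subcones of linearity of `ψ` inside `τ` are exactly
the cones of `X'` (i.e. any convex subset of `τ` on which `ψ` is linear lies in one of them). -/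
def IsGoodFor (X X' : Set (Set (V n))) (ψ : V n → ℚ) : Prop :=
  ∀ τ ∈ X, ConvexOn ℚ τ ψ ∧
    (∀ σ' ∈ X', σ' ⊆ τ → ∃ m : (V n) →ₗ[ℚ] ℚ, ∀ x ∈ σ', ψ x = m x) ∧
    (∀ (m : (V n) →ₗ[ℚ] ℚ) (t : Set (V n)), t ⊆ τ → Convex ℚ t →
      (∀ x ∈ t, ψ x = m x) → ∃ σ' ∈ X', σ' ⊆ τ ∧ t ⊆ σ')

/-- Sign conditions of a good sorting function with respect to the quadruple data on `X'`. -/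
def SignedOn (X' B' C' H' : Set (Set (V n))) (ψ : V n → ℚ) : Prop :=
  (∀ ν ∈ B', ∀ x ∈ ν, 0 ≤ ψ x) ∧ (∀ ν ∈ C', ∀ x ∈ ν, ψ x ≤ 0) ∧
  (∀ ν ∈ raysIn X', ν ∉ B' → ν ∉ C' → ν ∉ H' → ∀ x ∈ ν, ψ x = 0)

/-- Sign conditions restricted to the rays contained in a cone `τ`. -/
def SignedOnIn (τ : Set (V n)) (X' B' C' H' : Set (Set (V n))) (ψ : V n → ℚ) : Prop :=
  (∀ ν ∈ B', ν ⊆ τ → ∀ x ∈ ν, 0 ≤ ψ x) ∧ (∀ ν ∈ C', ν ⊆ τ → ∀ x ∈ ν, ψ x ≤ 0) ∧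
  (∀ ν ∈ raysIn X', ν ⊆ τ → ν ∉ B' → ν ∉ C' → ν ∉ H' → ∀ x ∈ ν, ψ x = 0)

/-- A convex subdivision, with respect to a fan quadruple structure on `X'`. -/
def IsConvexSubdiv (X' X B' C' H' : Set (Set (V n))) : Prop :=
  IsSubdivision X' X ∧ ∃ ψ : V n → ℚ, IsGoodFor X X' ψ ∧ SignedOn X' B' C' H' ψ

/-- A locally-convex subdivision: for each cone of the base there is a good sorting function
on that cone. -/
def IsLocallyConvexSubdiv (X' X B' C' H' : Set (Set (V n))) : Prop :=
  IsSubdivision X' X ∧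
    ∀ τ ∈ X, ∃ ψ : V n → ℚ, IsGoodFor {τ} X' ψ ∧ SignedOnIn τ X' B' C' H' ψ

/-- Star subdivision of `X` at a ray `ν` contained in the support of `X`. -/
def starSubdiv (X : Set (Set (V n))) (ν : Set (V n)) : Set (Set (V n)) :=
  {σ | σ ∈ X ∧ ¬ ν ⊆ σ} ∪
  {τ | ∃ σ ∈ X, ν ⊆ σ ∧ ∃ ξ, IsFaceOf ξ σ ∧ ¬ ν ⊆ ξ ∧ τ = coneHull (ξ ∪ ν)}

/-- The set `S` of facets used in the extension construction `Ext(𝔗, ν)`. -/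
noncomputable def extS (τ ν : Set (V n)) : Set (Set (V n)) :=
  if coneDim (coneHull (τ ∪ ν)) = coneDim τ + 1 then {τ}
  else {ζ | (IsFaceOf ζ τ ∧ coneDim ζ + 1 = coneDim τ) ∧
    ∃ m : (V n) →ₗ[ℚ] ℚ, (∀ x ∈ ζ, m x = 0) ∧ (∃ v ∈ ν, v ≠ 0 ∧ m v = -1) ∧
      ∀ x ∈ τ, x ∉ ζ → 0 < m x}

/-- All faces of cones of `extS τ ν`. -/
noncomputable def extFaces (τ ν : Set (V n)) : Set (Set (V n)) :=
  {ξ | ∃ ζ ∈ extS τ ν, IsFaceOf ξ ζ}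

/-- The extension `Ext(𝔗, ν)` of the affine fan of `τ` by the ray `ν`. -/
noncomputable def Ext (τ ν : Set (V n)) : Set (Set (V n)) :=
  {ν} ∪ faces τ ∪ (fun ξ => coneHull (ξ ∪ ν)) '' extFaces τ ν

/-- The extension `Ext(𝔗', ν)` of a subdivision `𝒯'` of the affine fan of `τ` by the ray
`ν`. -/
noncomputable def ExtSub (T' : Set (Set (V n))) (τ ν : Set (V n)) : Set (Set (V n)) :=
  {ν} ∪ T' ∪ (fun ξ => coneHull (ξ ∪ ν)) ''
    {ξ | ∃ ζ' ∈ T', (∃ ζ ∈ extS τ ν, ζ' ⊆ ζ) ∧ IsFaceOf ξ ζ'}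

/-- Sequential convexity of a sequence of star subdivisions (the list gives the rays in the
order in which the star subdivisions are performed). -/
def SeqConvex (B C H : Set (Set (V n))) : Set (Set (V n)) → List (Set (V n)) → Prop
  | _, [] => True
  | X, ν :: rest =>
      IsLocallyConvexSubdiv (starSubdiv X ν) X B C H ∧
      SeqConvex B C H (starSubdiv X ν) rest

section AuxConeHull
variable {A B : Set (V n)}

lemma mem_coneHull_of_mem {v : V n} (hv : v ∈ A) : v ∈ coneHull A :=
  ⟨{v}, by simpa using hv, fun _ => 1, fun _ _ => zero_le_one, by simp⟩

lemma zero_mem_coneHull (A : Set (V n)) : (0 : V n) ∈ coneHull A :=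
  ⟨∅, by simp, fun _ => 0, fun _ h => by simp at h, by simp⟩

lemma coneHull_subset_of_closed {C : Set (V n)} (h0 : (0:V n) ∈ C)
    (hadd : ∀ x ∈ C, ∀ y ∈ C, x + y ∈ C)
    (hsmul : ∀ (c : ℚ), 0 ≤ c → ∀ x ∈ C, c • x ∈ C) (hA : A ⊆ C) :
    coneHull A ⊆ C := by
  rintro x ⟨t, ht, c, hc, rfl⟩
  classical
  induction t using Finset.induction with
  | empty => simpa using h0
  | @insert a s hnotmem ih =>
    rw [Finset.sum_insert hnotmem]
    refine hadd _ (hsmul _ (hc a (by simp)) _ (hA (ht (by simp)))) _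
      (ih (fun v hv => ht (by simp [hv])) (fun v hv => hc v (by simp [hv])))

lemma sum_ite_coe {t' t : Finset (V n)} (c' : V n → ℚ) (h : t' ⊆ t) :
    (∑ v ∈ t, (if v ∈ t' then c' v else 0) • v) = ∑ v ∈ t', c' v • v := by
  classical
  rw [← Finset.sum_subset h (by intro x _ hx; simp [hx])]
  exact Finset.sum_congr rfl (fun x hx => by simp [hx])

lemma add_mem_coneHull {x y : V n}
    (hx : x ∈ coneHull A) (hy : y ∈ coneHull A) : x + y ∈ coneHull A := by
  classical
  obtain ⟨t₁, ht₁, c₁, hc₁, rfl⟩ := hx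
  obtain ⟨t₂, ht₂, c₂, hc₂, rfl⟩ := hy
  refine ⟨t₁ ∪ t₂, by rw [Finset.coe_union]; exact Set.union_subset ht₁ ht₂,
    fun v => (if v ∈ t₁ then c₁ v else 0) + (if v ∈ t₂ then c₂ v else 0), ?_, ?_⟩
  · intro v _
    have h1 : (0:ℚ) ≤ (if v ∈ t₁ then c₁ v else 0) := by split <;> simp_all [hc₁]
    have h2 : (0:ℚ) ≤ (if v ∈ t₂ then c₂ v else 0) := by split <;> simp_all [hc₂]
    exact add_nonneg h1 h2
  · simp only [add_smul, Finset.sum_add_distrib]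
    rw [sum_ite_coe c₁ Finset.subset_union_left, sum_ite_coe c₂ Finset.subset_union_right]

lemma smul_mem_coneHull {x : V n} {c : ℚ} (hc : 0 ≤ c) (hx : x ∈ coneHull A) :
    c • x ∈ coneHull A := by
  obtain ⟨t, ht, c', hc', rfl⟩ := hx
  exact ⟨t, ht, fun v => c * c' v, fun v hv => mul_nonneg hc (hc' v hv),
    by rw [Finset.smul_sum]; exact Finset.sum_congr rfl (fun v hv => (smul_smul c (c' v) v))⟩

lemma coneHull_mono (h : A ⊆ B) : coneHull A ⊆ coneHull B :=
  fun x ⟨t, ht, c, hc, hx⟩ => ⟨t, ht.trans h, c, hc, hx⟩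

lemma convex_coneHull (A : Set (V n)) : Convex ℚ (coneHull A) := by
  intro x hx y hy a b ha hb _
  exact add_mem_coneHull (smul_mem_coneHull ha hx) (smul_mem_coneHull hb hy)

/-- `coneHull` of a set that is already a cone. -/
lemma coneHull_eq_self (h0 : (0:V n) ∈ A) (hadd : ∀ x ∈ A, ∀ y ∈ A, x + y ∈ A)
    (hsmul : ∀ (c : ℚ), 0 ≤ c → ∀ x ∈ A, c • x ∈ A) : coneHull A = A :=
  Set.Subset.antisymm (coneHull_subset_of_closed h0 hadd hsmul subset_rfl)
    (fun _ h => mem_coneHull_of_mem h)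

lemma coneHull_coneHull (A : Set (V n)) : coneHull (coneHull A) = coneHull A :=
  coneHull_eq_self (zero_mem_coneHull A) (fun _ hx _ hy => add_mem_coneHull hx hy)
    (fun _ hc _ hx => smul_mem_coneHull hc hx)

lemma mem_coneHull_union_iff {x : V n} :
    x ∈ coneHull (A ∪ B) ↔ ∃ a ∈ coneHull A, ∃ b ∈ coneHull B, x = a + b := by
  classical
  constructor
  · rintro ⟨t, ht, c, hc, rfl⟩
    refine ⟨∑ v ∈ t.filter (· ∈ A), c v • v, ⟨t.filter (· ∈ A), by
        intro v hv; simp only [Finset.coe_filter, Set.mem_setOf_eq] at hv; exact hv.2,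
        c, fun v hv => hc v (Finset.mem_of_mem_filter v hv), rfl⟩,
      ∑ v ∈ t.filter (· ∉ A), c v • v, ⟨t.filter (· ∉ A), by
        intro v hv; simp only [Finset.coe_filter, Set.mem_setOf_eq] at hv
        rcases ht hv.1 with h | h; exact absurd h hv.2; exact h,
        c, fun v hv => hc v (Finset.mem_of_mem_filter v hv), rfl⟩, ?_⟩
    rw [← Finset.sum_filter_add_sum_filter_not t (· ∈ A)]
  · rintro ⟨a, ha, b, hb, rfl⟩
    exact add_mem_coneHull
      (coneHull_mono Set.subset_union_left ha)
      (coneHull_mono Set.subset_union_right hb)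

lemma mem_coneHull_singleton_iff {v x : V n} :
    x ∈ coneHull {v} ↔ ∃ t : ℚ, 0 ≤ t ∧ x = t • v := by
  constructor
  · rintro ⟨s, hs, c, hc, rfl⟩
    rcases Finset.subset_singleton_iff.mp (Finset.coe_subset_singleton.mp hs) with h | h
    · exact ⟨0, le_rfl, by simp [h]⟩
    · exact ⟨c v, hc v (by simp [h]), by simp [h]⟩
  · rintro ⟨t, ht, rfl⟩
    exact smul_mem_coneHull ht (mem_coneHull_of_mem rfl)

lemma span_coneHull (A : Set (V n)) :
    Submodule.span ℚ (coneHull A) = Submodule.span ℚ A := by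
  refine le_antisymm (Submodule.span_le.mpr (coneHull_subset_of_closed
    (Submodule.zero_mem _) (fun x hx y hy => Submodule.add_mem _ hx hy)
    (fun c _ x hx => Submodule.smul_mem _ c hx) Submodule.subset_span)) 
    (Submodule.span_mono (fun x hx => mem_coneHull_of_mem hx))

end AuxConeHull
section AuxFaces

lemma IsFaceOf.subset {F σ : Set (V n)} (h : IsFaceOf F σ) : F ⊆ σ := by
  obtain ⟨m, _, rfl⟩ := h; exact fun x hx => hx.1

lemma IsFaceOf.refl (σ : Set (V n)) : IsFaceOf σ σ :=
  ⟨0, fun x _ => le_rfl, by simp⟩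

lemma IsFaceOf.zero_mem {F σ : Set (V n)} (h : IsFaceOf F σ) (h0 : (0:V n) ∈ σ) :
    (0:V n) ∈ F := by
  obtain ⟨m, _, rfl⟩ := h; exact ⟨h0, by simp⟩

lemma IsPolyCone.zero_mem {σ : Set (V n)} (h : IsPolyCone σ) : (0:V n) ∈ σ := by
  obtain ⟨S, rfl⟩ := h; exact zero_mem_coneHull _

lemma IsPolyCone.add_mem {σ : Set (V n)} (h : IsPolyCone σ) {x y : V n}
    (hx : x ∈ σ) (hy : y ∈ σ) : x + y ∈ σ := by
  obtain ⟨S, rfl⟩ := h; exact add_mem_coneHull hx hy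

lemma IsPolyCone.smul_mem {σ : Set (V n)} (h : IsPolyCone σ) {c : ℚ} (hc : 0 ≤ c)
    {x : V n} (hx : x ∈ σ) : c • x ∈ σ := by
  obtain ⟨S, rfl⟩ := h; exact smul_mem_coneHull hc hx

lemma IsPolyCone.convex {σ : Set (V n)} (h : IsPolyCone σ) : Convex ℚ σ := by
  obtain ⟨S, rfl⟩ := h; exact convex_coneHull _

lemma IsPolyCone.coneHull_eq {σ : Set (V n)} (h : IsPolyCone σ) : coneHull σ = σ := by
  obtain ⟨S, rfl⟩ := h; exact coneHull_coneHull _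

/-- A face of the cone hull of a finite set is the conehull of a sub(finite)set. -/
lemma face_coneHull_eq {S : Finset (V n)} {m : (V n) →ₗ[ℚ] ℚ}
    (hm : ∀ x ∈ coneHull (↑S : Set (V n)), 0 ≤ m x) :
    {x ∈ coneHull (↑S : Set (V n)) | m x = 0}
      = coneHull (↑(S.filter (fun v => m v = 0)) : Set (V n)) := by
  classical
  apply Set.Subset.antisymm
  · rintro x ⟨⟨t, ht, c, hc, rfl⟩, hx0⟩
    have hterm : ∀ v ∈ t, c v * m v = 0 := by
      intro v hv
      have hnn : ∀ w ∈ t, 0 ≤ c w * m w := fun w hw =>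
        mul_nonneg (hc w hw) (hm w (mem_coneHull_of_mem (ht hw)))
      have hsum : ∑ w ∈ t, c w * m w = 0 := by
        have := hx0
        rw [map_sum] at this
        simpa [map_smul, smul_eq_mul] using this
      exact (Finset.sum_eq_zero_iff_of_nonneg hnn).mp hsum v hv
    refine ⟨t.filter (fun v => m v = 0), ?_, c, fun v hv => hc v (Finset.mem_of_mem_filter v hv), ?_⟩
    · intro v hv
      simp only [Finset.coe_filter, Set.mem_setOf_eq] at hv
      simp only [Finset.coe_filter, Set.mem_setOf_eq]
      exact ⟨ht hv.1, hv.2⟩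
    · rw [← Finset.sum_filter_add_sum_filter_not t (fun v => m v = 0)]
      have : ∑ v ∈ t.filter (fun v => ¬ m v = 0), c v • v = 0 := by
        apply Finset.sum_eq_zero
        intro v hv
        simp only [Finset.mem_filter] at hv
        have := hterm v hv.1
        have hc0 : c v = 0 := by
          rcases mul_eq_zero.mp this with h | h
          · exact h
          · exact absurd h hv.2
        simp [hc0]
      rw [this, add_zero]
  · intro x hx
    have hsub : (↑(S.filter (fun v => m v = 0)) : Set (V n)) ⊆ (↑S : Set (V n)) := by
      intro v hv; simp only [Finset.coe_filter, Set.mem_setOf_eq] at hv; exact hv.1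
    refine ⟨coneHull_mono hsub hx, ?_⟩
    obtain ⟨t, ht, c, hc, rfl⟩ := hx
    rw [map_sum]
    apply Finset.sum_eq_zero
    intro v hv
    have : m v = 0 := by
      have := ht hv
      simp only [Finset.coe_filter, Set.mem_setOf_eq] at this
      exact this.2
    simp [map_smul, this, smul_eq_mul]

lemma IsPolyCone.face {σ F : Set (V n)} (h : IsPolyCone σ) (hF : IsFaceOf F σ) :
    IsPolyCone F := by
  obtain ⟨S, rfl⟩ := h
  obtain ⟨m, hm, rfl⟩ := hF
  exact ⟨_, face_coneHull_eq hm⟩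

lemma IsPolyCone.faces_finite {σ : Set (V n)} (h : IsPolyCone σ) :
    {F | IsFaceOf F σ}.Finite := by
  classical
  obtain ⟨S, rfl⟩ := h
  have hfin := Set.Finite.image (fun T : Finset (V n) => coneHull (↑T : Set (V n)))
    (S.powerset.finite_toSet)
  apply hfin.subset
  rintro F ⟨m, hm, rfl⟩
  exact ⟨S.filter (fun v => m v = 0),
    Finset.mem_coe.mpr (Finset.mem_powerset.mpr (Finset.filter_subset _ _)),
    (face_coneHull_eq hm).symm⟩

/-- cone of a face: a face of a polyhedral cone is closed under the cone operations. -/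
lemma IsFaceOf.add_mem {F σ : Set (V n)} (hσ : IsPolyCone σ) (h : IsFaceOf F σ)
    {x y : V n} (hx : x ∈ F) (hy : y ∈ F) : x + y ∈ F := by
  obtain ⟨m, hm, rfl⟩ := h
  exact ⟨hσ.add_mem hx.1 hy.1, by rw [map_add, hx.2, hy.2, add_zero]⟩

lemma IsFaceOf.smul_mem {F σ : Set (V n)} (hσ : IsPolyCone σ) (h : IsFaceOf F σ)
    {c : ℚ} (hc : 0 ≤ c) {x : V n} (hx : x ∈ F) : c • x ∈ F := by
  obtain ⟨m, hm, rfl⟩ := h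
  exact ⟨hσ.smul_mem hc hx.1, by rw [map_smul, hx.2, smul_zero]⟩

lemma IsFaceOf.inter {F₁ F₂ σ : Set (V n)} (h₁ : IsFaceOf F₁ σ) (h₂ : IsFaceOf F₂ σ) :
    IsFaceOf (F₁ ∩ F₂) σ := by
  obtain ⟨m₁, hm₁, rfl⟩ := h₁
  obtain ⟨m₂, hm₂, rfl⟩ := h₂
  refine ⟨m₁ + m₂, fun x hx => add_nonneg (hm₁ x hx) (hm₂ x hx), ?_⟩
  ext x
  simp only [Set.mem_inter_iff, Set.mem_setOf_eq, LinearMap.add_apply]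
  constructor
  · rintro ⟨⟨hx, h1⟩, ⟨_, h2⟩⟩; exact ⟨hx, by rw [h1, h2, add_zero]⟩
  · rintro ⟨hx, h12⟩
    have h1 : 0 ≤ m₁ x := hm₁ x hx
    have h2 : 0 ≤ m₂ x := hm₂ x hx
    exact ⟨⟨hx, by linarith⟩, ⟨hx, by linarith⟩⟩

/-- Transitivity of faces for polyhedral cones. -/
lemma IsFaceOf.trans {G F σ : Set (V n)} (hσ : IsPolyCone σ)
    (hGF : IsFaceOf G F) (hFσ : IsFaceOf F σ) : IsFaceOf G σ := by
  classical
  obtain ⟨S, rfl⟩ := hσ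
  obtain ⟨m, hm, rfl⟩ := hFσ
  obtain ⟨g, hg, rfl⟩ := hGF
  obtain ⟨N, hN⟩ : ∃ N : ℚ, ∀ s ∈ S, 0 < m s → 0 < g s + N * m s := by
    by_cases hT : (S.filter (fun s => 0 < m s)).Nonempty
    · set T := S.filter (fun s => 0 < m s) with hTdef
      set f : V n → ℚ := fun s => (1 - g s) / m s with hfdef
      refine ⟨(T.image f).max' (hT.image _), ?_⟩
      intro s hs hms
      have hmem : f s ∈ T.image f := Finset.mem_image_of_mem f
        (Finset.mem_filter.mpr ⟨hs, hms⟩)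
      have hle : f s ≤ (T.image f).max' (hT.image _) := Finset.le_max' _ _ hmem
      rw [hfdef] at hle
      simp only at hle
      rw [div_le_iff₀ hms] at hle
      nlinarith
    · exact ⟨0, fun s hs hms => absurd ⟨s, Finset.mem_filter.mpr ⟨hs, hms⟩⟩ hT⟩
  have hkey : ∀ s ∈ S, 0 ≤ g s + N * m s := by
    intro s hs
    have hsS : s ∈ coneHull (↑S : Set (V n)) := mem_coneHull_of_mem hs
    have hms : 0 ≤ m s := hm s hsS
    rcases lt_or_eq_of_le hms with h | h
    · exact le_of_lt (hN s hs h)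
    · have hgs : 0 ≤ g s := hg s ⟨hsS, h.symm⟩
      rw [← h, mul_zero, add_zero]
      exact hgs
  refine ⟨g + N • m, ?_, ?_⟩
  · rintro x ⟨t, ht, c, hc, rfl⟩
    simp only [LinearMap.add_apply, LinearMap.smul_apply, smul_eq_mul, map_sum]
    apply Finset.sum_nonneg
    intro s hs
    have h1 := hkey s (ht hs)
    have h2 := hc s hs
    simp only [map_smul, smul_eq_mul]
    nlinarith
  · ext x
    simp only [Set.mem_setOf_eq, LinearMap.add_apply, LinearMap.smul_apply, smul_eq_mul]
    constructor
    · rintro ⟨⟨hx, hmx⟩, hgx⟩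
      exact ⟨hx, by rw [hgx, hmx]; ring⟩
    · rintro ⟨hx, hsum⟩
      obtain ⟨t, ht, c, hc, hxdef⟩ := hx
      subst hxdef
      have hterm : ∀ s ∈ t, c s * (g s + N * m s) = 0 := by
        apply (Finset.sum_eq_zero_iff_of_nonneg _).mp
        · rw [← hsum, map_sum, map_sum, Finset.mul_sum, ← Finset.sum_add_distrib]
          apply Finset.sum_congr rfl
          intro s hs
          simp only [map_smul, smul_eq_mul]
          ring
        · intro s hs
          exact mul_nonneg (hc s hs) (hkey s (ht hs))
      have hzero : ∀ s ∈ t, c s ≠ 0 → (m s = 0 ∧ g s = 0) := by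
        intro s hs hcs
        have h2 : g s + N * m s = 0 := by
          rcases mul_eq_zero.mp (hterm s hs) with h | h
          · exact absurd h hcs
          · exact h
        have hsS : s ∈ coneHull (↑S : Set (V n)) := mem_coneHull_of_mem (ht hs)
        have hms : 0 ≤ m s := hm s hsS
        rcases lt_or_eq_of_le hms with h | h
        · exact absurd h2 (ne_of_gt (hN s (ht hs) h))
        · have hms0 : m s = 0 := h.symm
          rw [hms0, mul_zero, add_zero] at h2
          exact ⟨hms0, h2⟩
      have hmx : m (∑ v ∈ t, c v • v) = 0 := by
        rw [map_sum]
        apply Finset.sum_eq_zero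
        intro s hs
        by_cases hcs : c s = 0
        · simp [hcs]
        · simp [map_smul, smul_eq_mul, (hzero s hs hcs).1]
      have hgx2 : g (∑ v ∈ t, c v • v) = 0 := by
        rw [map_sum]
        apply Finset.sum_eq_zero
        intro s hs
        by_cases hcs : c s = 0
        · simp [hcs]
        · simp [map_smul, smul_eq_mul, (hzero s hs hcs).2]
      exact ⟨⟨⟨t, ht, c, hc, rfl⟩, hmx⟩, hgx2⟩

lemma StronglyConvex.mono {σ τ : Set (V n)} (h : StronglyConvex σ) (hsub : τ ⊆ σ) :
    StronglyConvex τ := fun x hx hnx => h x (hsub hx) (hsub hnx)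

end AuxFaces
section AuxDim

/-- A face of a one-dimensional cone containing a nonzero point is the whole cone. -/
lemma face_of_dim_one_eq {F ν : Set (V n)} (hF : IsFaceOf F ν) (hd : coneDim ν = 1)
    {x : V n} (hx : x ∈ F) (hx0 : x ≠ 0) : F = ν := by
  obtain ⟨m, hm, rfl⟩ := hF
  apply Set.Subset.antisymm (fun y hy => hy.1)
  intro y hy
  have hxspan : x ∈ Submodule.span ℚ ν := Submodule.subset_span hx.1
  have h1 : Submodule.span ℚ {x} ≤ Submodule.span ℚ ν := by
    rw [Submodule.span_le, Set.singleton_subset_iff]; exact hxspan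
  have heq : Submodule.span ℚ {x} = Submodule.span ℚ ν := by
    apply Submodule.eq_of_le_of_finrank_le h1
    rw [finrank_span_singleton hx0]
    exact le_of_eq hd
  have hyx : y ∈ Submodule.span ℚ ({x} : Set (V n)) := by
    rw [heq]; exact Submodule.subset_span hy
  obtain ⟨c, rfl⟩ := Submodule.mem_span_singleton.mp hyx
  refine ⟨hy, ?_⟩
  rw [map_smul, hx.2, smul_zero]

/-- Structure of rays: every 1-dimensional strongly convex polyhedral cone is
spanned by a single nonzero vector. -/
lemma ray_exists_gen {ν : Set (V n)} (hp : IsPolyCone ν) (hs : StronglyConvex ν)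
    (hd : coneDim ν = 1) : ∃ v : V n, v ≠ 0 ∧ ν = coneHull {v} := by
  obtain ⟨S, rfl⟩ := hp
  have hex : ∃ v ∈ S, v ≠ (0 : V n) := by
    by_contra h
    push_neg at h
    have : Submodule.span ℚ (coneHull (↑S : Set (V n))) = ⊥ := by
      rw [span_coneHull]
      rw [Submodule.span_eq_bot]
      intro v hv
      exact h v hv
    rw [coneDim, this] at hd
    simp at hd
  obtain ⟨v, hvS, hv0⟩ := hex
  refine ⟨v, hv0, ?_⟩
  have hspan : Submodule.span ℚ (↑S : Set (V n)) = Submodule.span ℚ ({v} : Set (V n)) := by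
    symm
    apply Submodule.eq_of_le_of_finrank_le
    · rw [Submodule.span_le, Set.singleton_subset_iff]
      exact Submodule.subset_span hvS
    · rw [finrank_span_singleton hv0]
      have : coneDim (coneHull (↑S : Set (V n))) = Module.finrank ℚ (Submodule.span ℚ (↑S : Set (V n))) := by
        rw [coneDim, span_coneHull]
      omega
  -- every element of S is a nonnegative multiple of v
  have hcoef : ∀ s ∈ S, ∃ c : ℚ, 0 ≤ c ∧ s = c • v := by
    intro s hsS
    have : s ∈ Submodule.span ℚ ({v} : Set (V n)) := by
      rw [← hspan]; exact Submodule.subset_span hsS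
    obtain ⟨c, rfl⟩ := Submodule.mem_span_singleton.mp this
    rcases le_or_gt 0 c with hc | hc
    · exact ⟨c, hc, rfl⟩
    · exfalso
      have hmem : c • v ∈ coneHull (↑S : Set (V n)) := mem_coneHull_of_mem hsS
      have hneg : -(c • v) ∈ coneHull (↑S : Set (V n)) := by
        have : -(c • v) = (-(1:ℚ)) • (c • v) := by simp
        rw [this, smul_smul]
        have hv' : v ∈ coneHull (↑S : Set (V n)) := mem_coneHull_of_mem hvS
        have : (-1 * c) • v = (-c) • v := by ring_nf
        rw [this]
        exact smul_mem_coneHull (by linarith) hv'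
      have := hs _ hmem hneg
      rw [smul_eq_zero] at this
      rcases this with h | h
      · exact absurd h (ne_of_lt hc)
      · exact hv0 h
  apply Set.Subset.antisymm
  · apply coneHull_subset_of_closed (zero_mem_coneHull _)
      (fun x hx y hy => add_mem_coneHull hx hy) (fun c hc x hx => smul_mem_coneHull hc hx)
    intro s hsS
    obtain ⟨c, hc, rfl⟩ := hcoef s hsS
    exact smul_mem_coneHull hc (mem_coneHull_of_mem rfl)
  · exact coneHull_mono (by simpa using hvS)

lemma mem_ray_self {v : V n} : v ∈ coneHull ({v} : Set (V n)) := mem_coneHull_of_mem rfl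

end AuxDim

section AuxLinAlg

/-- Dual functional vanishing on a subspace and equal to 1 at a vector outside it. -/
lemma exists_dual_of_not_mem {W : Submodule ℚ (V n)} {v : V n} (hv : v ∉ W) :
    ∃ l : (V n) →ₗ[ℚ] ℚ, (∀ w ∈ W, l w = 0) ∧ l v = 1 := by
  set Q := V n ⧸ W
  have hvb : (Submodule.Quotient.mk v : Q) ≠ 0 := by
    simpa [Submodule.Quotient.mk_eq_zero] using hv
  set vb : Q := Submodule.Quotient.mk v with hvbdef
  obtain ⟨C, hC⟩ := Submodule.exists_isCompl (Submodule.span ℚ {vb})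
  set proj := (Submodule.span ℚ ({vb} : Set Q)).linearProjOfIsCompl C hC
  set e := LinearEquiv.toSpanNonzeroSingleton ℚ Q vb hvb
  refine ⟨(e.symm.toLinearMap.comp proj).comp W.mkQ, ?_, ?_⟩
  · intro w hw
    have : W.mkQ w = 0 := by simpa [Submodule.mkQ_apply, Submodule.Quotient.mk_eq_zero] using hw
    simp [this]
  · have h1 : W.mkQ v = vb := rfl
    have h2 : proj vb = ⟨vb, Submodule.mem_span_singleton_self vb⟩ :=
      Submodule.linearProjOfIsCompl_apply_left hC ⟨vb, Submodule.mem_span_singleton_self vb⟩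
    have h3 : e 1 = ⟨vb, Submodule.mem_span_singleton_self vb⟩ := by
      apply Subtype.ext
      simp [e, LinearEquiv.toSpanNonzeroSingleton]
    simp only [LinearMap.comp_apply, h1, h2]
    rw [← h3]
    simp
  
/-- A projection that is the identity on `U` and kills `W`, when `U ⊓ W = ⊥`. -/
lemma exists_projection {U W : Submodule ℚ (V n)} (h : U ⊓ W = ⊥) :
    ∃ π : (V n) →ₗ[ℚ] (V n), (∀ u ∈ U, π u = u) ∧ (∀ w ∈ W, π w = 0) := by
  obtain ⟨C, hC⟩ := Submodule.exists_isCompl (U ⊔ W)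
  have hcompl : IsCompl U (W ⊔ C) := by
    constructor
    · rw [disjoint_iff]
      apply (Submodule.eq_bot_iff _).mpr
      intro x ⟨hxU, hxWC⟩
      obtain ⟨w, hw, c, hc, hxeq⟩ := Submodule.mem_sup.mp hxWC
      have hcmem : c ∈ (U ⊔ W) ⊓ C := by
        refine ⟨?_, hc⟩
        have hceq : c = x - w := by rw [← hxeq]; abel
        rw [hceq]
        exact Submodule.sub_mem _ (Submodule.mem_sup_left hxU) (Submodule.mem_sup_right hw)
      have hc0 : c = 0 := by
        rw [hC.inf_eq_bot] at hcmem
        exact (Submodule.mem_bot ℚ).mp hcmem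
      have hxw : x = w := by rw [← hxeq, hc0, add_zero]
      have : x ∈ U ⊓ W := ⟨hxU, hxw ▸ hw⟩
      rw [h] at this
      exact (Submodule.mem_bot ℚ).mp this
    · rw [codisjoint_iff, ← sup_assoc]
      exact hC.codisjoint.eq_top
  refine ⟨U.subtype.comp (U.projectionOnto _ hcompl), ?_, ?_⟩
  · intro u hu
    simp [Submodule.projectionOnto_apply_left hcompl ⟨u, hu⟩]
  · intro w hw
    simp [Submodule.projectionOnto_apply_right hcompl ⟨w, Submodule.mem_sup_left hw⟩]

/-- Extend an additive function on a cone `K` to a linear functional. -/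
lemma exists_linear_of_additive {K : Set (V n)} (h0 : (0:V n) ∈ K)
    (hadd : ∀ x ∈ K, ∀ y ∈ K, x + y ∈ K)
    (hsmul : ∀ (c : ℚ), 0 ≤ c → ∀ x ∈ K, c • x ∈ K)
    {f : V n → ℚ} (hf0 : f 0 = 0)
    (hfadd : ∀ x ∈ K, ∀ y ∈ K, f (x + y) = f x + f y) :
    ∃ m : (V n) →ₗ[ℚ] ℚ, ∀ x ∈ K, m x = f x := by
  classical
  set W := Submodule.span ℚ K with hW
  have hrep : ∀ z ∈ W, ∃ p : (V n) × (V n), p.1 ∈ K ∧ p.2 ∈ K ∧ z = p.1 - p.2 := by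
    intro z hz
    induction hz using Submodule.span_induction with
    | mem x hx => exact ⟨(x, 0), hx, h0, by simp⟩
    | zero => exact ⟨(0, 0), h0, h0, by simp⟩
    | add x y _ _ hx hy =>
      obtain ⟨⟨a, b⟩, ha, hb, rfl⟩ := hx
      obtain ⟨⟨c, d⟩, hc, hd, rfl⟩ := hy
      exact ⟨(a + c, b + d), hadd a ha c hc, hadd b hb d hd, by dsimp only; abel⟩
    | smul c x _ hx =>
      obtain ⟨⟨a, b⟩, ha, hb, rfl⟩ := hx
      rcases le_or_gt 0 c with hc | hc
      · exact ⟨(c • a, c • b), hsmul c hc a ha, hsmul c hc b hb, by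
          simp [smul_sub]⟩
      · refine ⟨((-c) • b, (-c) • a), hsmul _ (by linarith) b hb, hsmul _ (by linarith) a ha, ?_⟩
        simp [smul_sub]
        abel
  have hwd : ∀ a ∈ K, ∀ b ∈ K, ∀ c ∈ K, ∀ d ∈ K, a - b = c - d → f a - f b = f c - f d := by
    intro a ha b hb c hc d hd habcd
    have : a + d = c + b := by
      have := sub_eq_sub_iff_add_eq_add.mp habcd
      linear_combination (norm := module) this
    have h1 : f (a + d) = f (c + b) := by rw [this]
    rw [hfadd a ha d hd, hfadd c hc b hb] at h1
    linarith
  obtain ⟨g, hgval⟩ : ∃ g : V n → ℚ, ∀ a ∈ K, ∀ b ∈ K, g (a - b) = f a - f b := by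
    classical
    refine ⟨fun z =>
      if h : ∃ p : (V n) × (V n), p.1 ∈ K ∧ p.2 ∈ K ∧ z = p.1 - p.2
      then f h.choose.1 - f h.choose.2 else 0, ?_⟩
    intro a ha b hb
    have hex : ∃ p : (V n) × (V n), p.1 ∈ K ∧ p.2 ∈ K ∧ a - b = p.1 - p.2 := ⟨(a, b), ha, hb, rfl⟩
    simp only [dif_pos hex]
    exact hwd _ hex.choose_spec.1 _ hex.choose_spec.2.1 a ha b hb hex.choose_spec.2.2.symm
  have hgadd : ∀ z₁ ∈ W, ∀ z₂ ∈ W, g (z₁ + z₂) = g z₁ + g z₂ := by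
    intro z₁ hz₁ z₂ hz₂
    obtain ⟨⟨a, b⟩, ha, hb, rfl⟩ := hrep z₁ hz₁
    obtain ⟨⟨c, d⟩, hc, hd, rfl⟩ := hrep z₂ hz₂
    have heq : a - b + (c - d) = (a + c) - (b + d) := by abel
    rw [heq, hgval _ (hadd a ha c hc) _ (hadd b hb d hd), hgval a ha b hb, hgval c hc d hd,
      hfadd a ha c hc, hfadd b hb d hd]
    ring
  have hg0 : g 0 = 0 := by
    have h := hgval 0 h0 0 h0
    rw [sub_self] at h
    rw [h, hf0, sub_self]
  set G : W →+ ℚ :=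
    { toFun := fun z => g z.1
      map_zero' := hg0
      map_add' := by
        rintro ⟨z₁, hz₁⟩ ⟨z₂, hz₂⟩
        exact hgadd z₁ hz₁ z₂ hz₂ } with hG
  set Glin : W →ₗ[ℚ] ℚ := G.toRatLinearMap with hGlin
  obtain ⟨C, hC⟩ := Submodule.exists_isCompl W
  set proj := W.linearProjOfIsCompl C hC
  refine ⟨Glin.comp proj, ?_⟩
  intro x hx
  have hxW : x ∈ W := Submodule.subset_span hx
  have h1 : proj x = ⟨x, hxW⟩ := Submodule.linearProjOfIsCompl_apply_left hC ⟨x, hxW⟩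
  simp only [LinearMap.comp_apply, h1]
  show g x = f x
  have h2 := hgval x hx 0 h0
  rw [sub_zero] at h2
  rw [h2, hf0, sub_zero]

end AuxLinAlg
section AuxHRep

/-- Elements of the cone hull of `insert v S`. -/
lemma coneHull_insert_mem {S : Finset (V n)} {v x : V n} :
    x ∈ coneHull (↑(insert v S) : Set (V n)) ↔
      ∃ u ∈ coneHull (↑S : Set (V n)), ∃ t : ℚ, 0 ≤ t ∧ x = u + t • v := by
  classical
  rw [Finset.coe_insert, Set.insert_eq, Set.union_comm, mem_coneHull_union_iff]
  constructor
  · rintro ⟨a, ha, b, hb, rfl⟩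
    obtain ⟨t, ht, rfl⟩ := mem_coneHull_singleton_iff.mp hb
    exact ⟨a, ha, t, ht, rfl⟩
  · rintro ⟨u, hu, t, ht, rfl⟩
    exact ⟨u, hu, t • v, mem_coneHull_singleton_iff.mpr ⟨t, ht, rfl⟩, rfl⟩

/-- Weyl duality: every finitely generated cone is a finite intersection of halfspaces. -/
lemma coneHull_exists_hrep (S : Finset (V n)) :
    ∃ M : Finset ((V n) →ₗ[ℚ] ℚ),
      coneHull (↑S : Set (V n)) = {x | ∀ m ∈ M, 0 ≤ m x} := by
  classical
  induction S using Finset.induction with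
  | empty =>
    refine ⟨(Finset.univ.image fun i : Fin n => LinearMap.proj i) ∪
      (Finset.univ.image fun i : Fin n => -(LinearMap.proj (R := ℚ) (φ := fun _ : Fin n => ℚ) i)), ?_⟩
    ext x
    simp only [Finset.coe_empty, Set.mem_setOf_eq]
    constructor
    · intro hx
      have hx0 : x = 0 := by
        obtain ⟨t, ht, c, hc, rfl⟩ := hx
        have : t = ∅ := Finset.eq_empty_of_forall_notMem (fun y hy => by simpa using ht hy)
        simp [this]
      intro m hm
      simp [hx0]
    · intro hx
      have : x = 0 := by
        funext i
        have h1 : 0 ≤ x i := by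
          have := hx (LinearMap.proj i) (Finset.mem_union_left _
            (Finset.mem_image_of_mem _ (Finset.mem_univ i)))
          simpa using this
        have h2 : 0 ≤ -(x i) := by
          have := hx (-(LinearMap.proj (R := ℚ) (φ := fun _ : Fin n => ℚ) i))
            (Finset.mem_union_right _ (Finset.mem_image_of_mem _ (Finset.mem_univ i)))
          simpa using this
        have : x i = 0 := le_antisymm (by linarith) h1
        simpa using this
      rw [this]
      exact zero_mem_coneHull _
  | @insert v S hv ih =>
    obtain ⟨M, hM⟩ := ih
    have hMnn : ∀ {u : V n}, u ∈ coneHull (↑S : Set (V n)) → ∀ m ∈ M, 0 ≤ m u := by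
      intro u hu
      rw [hM] at hu
      exact hu
    set M0 := M.filter (fun m => m v = 0) with hM0
    set Mp := M.filter (fun m => 0 < m v) with hMp
    set Mn := M.filter (fun m => m v < 0) with hMn
    set Mx := (Mp ×ˢ Mn).image (fun p => (p.1 v) • p.2 - (p.2 v) • p.1) with hMx
    refine ⟨M0 ∪ Mp ∪ Mx, ?_⟩
    ext x
    simp only [Set.mem_setOf_eq]
    constructor
    · -- forward inclusion
      intro hx
      obtain ⟨u, hu, t, ht, rfl⟩ := coneHull_insert_mem.mp hx
      intro q hq
      rcases Finset.mem_union.mp hq with hq' | hqx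
      · rcases Finset.mem_union.mp hq' with hq0 | hqp
        · have hqM := Finset.mem_filter.mp hq0
          rw [map_add, map_smul, smul_eq_mul, hqM.2, mul_zero, add_zero]
          exact hMnn hu q hqM.1
        · have hqM := Finset.mem_filter.mp hqp
          rw [map_add, map_smul, smul_eq_mul]
          have := hMnn hu q hqM.1
          nlinarith [hqM.2]
      · obtain ⟨⟨m₁, m₂⟩, hp, rfl⟩ := Finset.mem_image.mp hqx
        obtain ⟨h1, h2⟩ := Finset.mem_product.mp hp
        have hm₁ := Finset.mem_filter.mp h1
        have hm₂ := Finset.mem_filter.mp h2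
        have e1 := hMnn hu m₁ hm₁.1
        have e2 := hMnn hu m₂ hm₂.1
        simp only [LinearMap.sub_apply, LinearMap.smul_apply, smul_eq_mul, map_add, map_smul]
        have hv1 : 0 < m₁ v := hm₁.2
        have hv2 : m₂ v < 0 := hm₂.2
        nlinarith
    · -- reverse inclusion
      intro hx
      have hx0 : ∀ m ∈ M0, 0 ≤ m x := fun m hm =>
        hx m (Finset.mem_union_left _ (Finset.mem_union_left _ hm))
      have hxp : ∀ m ∈ Mp, 0 ≤ m x := fun m hm =>
        hx m (Finset.mem_union_left _ (Finset.mem_union_right _ hm))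
      have hxx : ∀ m₁ ∈ Mp, ∀ m₂ ∈ Mn, 0 ≤ (m₁ v) * (m₂ x) - (m₂ v) * (m₁ x) := by
        intro m₁ h1 m₂ h2
        have hpair : (m₁, m₂) ∈ Mp ×ˢ Mn := Finset.mem_product.mpr ⟨h1, h2⟩
        have hmem : (m₁ v) • m₂ - (m₂ v) • m₁ ∈ Mx :=
          Finset.mem_image.mpr ⟨(m₁, m₂), hpair, rfl⟩
        have := hx ((m₁ v) • m₂ - (m₂ v) • m₁) (Finset.mem_union_right _ hmem)
        simpa using this
      have hMsplit : ∀ m ∈ M, m ∈ M0 ∨ m ∈ Mp ∨ m ∈ Mn := by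
        intro m hm
        rcases lt_trichotomy (m v) 0 with h | h | h
        · exact Or.inr (Or.inr (Finset.mem_filter.mpr ⟨hm, h⟩))
        · exact Or.inl (Finset.mem_filter.mpr ⟨hm, h⟩)
        · exact Or.inr (Or.inl (Finset.mem_filter.mpr ⟨hm, h⟩))
      by_cases hP : Mp.Nonempty
      · set t : ℚ := (Mp.image (fun m => m x / m v)).min' (hP.image _) with htdef
        obtain ⟨m₀, hm₀Mp, hm₀⟩ : ∃ m₀ ∈ Mp, m₀ x / m₀ v = t := by
          have := (Mp.image (fun m => m x / m v)).min'_mem (hP.image _)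
          rw [← htdef] at this
          obtain ⟨m₀, hm₀, h⟩ := Finset.mem_image.mp this
          exact ⟨m₀, hm₀, h⟩
        have hm₀v : 0 < m₀ v := (Finset.mem_filter.mp hm₀Mp).2
        have ht0 : 0 ≤ t := by
          rw [← hm₀]
          exact div_nonneg (hxp m₀ hm₀Mp) (le_of_lt hm₀v)
        have hle : ∀ m ∈ Mp, t ≤ m x / m v := by
          intro m hm
          exact Finset.min'_le _ _ (Finset.mem_image_of_mem _ hm)
        have hu : x - t • v ∈ coneHull (↑S : Set (V n)) := by
          rw [hM]
          intro m hm
          rcases hMsplit m hm with h0 | hp | hn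
          · have := (Finset.mem_filter.mp h0).2
            rw [map_sub, map_smul, smul_eq_mul, this, mul_zero, sub_zero]
            exact hx0 m h0
          · have hmv := (Finset.mem_filter.mp hp).2
            have := hle m hp
            rw [le_div_iff₀ hmv] at this
            rw [map_sub, map_smul, smul_eq_mul]
            linarith
          · have hmv := (Finset.mem_filter.mp hn).2
            have hpair := hxx m₀ hm₀Mp m hn
            rw [map_sub, map_smul, smul_eq_mul]
            -- m x ≥ t * m v where t = m₀ x / m₀ v
            have : m v * (m₀ x) ≤ m₀ v * (m x) := by linarith
            rw [← hm₀]
            rw [sub_nonneg]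
            rw [div_mul_eq_mul_div, div_le_iff₀ hm₀v]
            nlinarith
        exact coneHull_insert_mem.mpr ⟨x - t • v, hu, t, ht0, by abel⟩
      · -- no positive constraints: take t large
        set t : ℚ := ((Mn.image (fun m => m x / m v)) ∪ {0}).max'
          (Finset.Nonempty.inr (Finset.singleton_nonempty 0)) with htdef
        have ht0 : 0 ≤ t := by
          rw [htdef]
          exact Finset.le_max' _ _ (Finset.mem_union_right _ (by simp))
        have hu : x - t • v ∈ coneHull (↑S : Set (V n)) := by
          rw [hM]
          intro m hm
          rcases hMsplit m hm with h0 | hp | hn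
          · have := (Finset.mem_filter.mp h0).2
            rw [map_sub, map_smul, smul_eq_mul, this, mul_zero, sub_zero]
            exact hx0 m h0
          · exact absurd ⟨m, hp⟩ hP
          · have hmv := (Finset.mem_filter.mp hn).2
            have hge : m x / m v ≤ t := by
              rw [htdef]
              exact Finset.le_max' _ (m x / m v)
                (Finset.mem_union_left _ (Finset.mem_image.mpr ⟨m, hn, rfl⟩))
            rw [map_sub, map_smul, smul_eq_mul]
            rw [div_le_iff_of_neg hmv] at hge
            linarith
        exact coneHull_insert_mem.mpr ⟨x - t • v, hu, t, ht0, by abel⟩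

lemma IsPolyCone.exists_hrep {σ : Set (V n)} (h : IsPolyCone σ) :
    ∃ M : Finset ((V n) →ₗ[ℚ] ℚ), σ = {x | ∀ m ∈ M, 0 ≤ m x} := by
  obtain ⟨S, rfl⟩ := h
  exact coneHull_exists_hrep S

/-- For strongly convex polyhedral cones, `{0}` is a face. -/
lemma exists_strict_functional {σ : Set (V n)} (hp : IsPolyCone σ) (hs : StronglyConvex σ) :
    ∃ g : (V n) →ₗ[ℚ] ℚ, (∀ x ∈ σ, 0 ≤ g x) ∧ (∀ x ∈ σ, g x = 0 → x = 0) := by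
  obtain ⟨M, hM⟩ := hp.exists_hrep
  refine ⟨∑ m ∈ M, m, ?_, ?_⟩
  · intro x hx
    rw [LinearMap.coe_sum, Finset.sum_apply]
    apply Finset.sum_nonneg
    intro m hm
    rw [hM] at hx
    exact hx m hm
  · intro x hx hx0
    have hx' : ∀ m ∈ M, 0 ≤ m x := by rw [hM] at hx; exact hx
    have hsum : ∑ m ∈ M, m x = 0 := by
      rw [LinearMap.coe_sum, Finset.sum_apply] at hx0
      exact hx0
    have hall : ∀ m ∈ M, m x = 0 := (Finset.sum_eq_zero_iff_of_nonneg hx').mp hsum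
    have hneg : -x ∈ σ := by
      rw [hM]
      intro m hm
      rw [map_neg, hall m hm, neg_zero]
    exact hs x hx hneg

lemma zero_face {σ : Set (V n)} (hp : IsPolyCone σ) (hs : StronglyConvex σ) :
    IsFaceOf {0} σ := by
  obtain ⟨g, hg1, hg2⟩ := exists_strict_functional hp hs
  refine ⟨g, hg1, ?_⟩
  ext x
  simp only [Set.mem_singleton_iff, Set.mem_setOf_eq]
  constructor
  · rintro rfl
    exact ⟨hp.zero_mem, by simp⟩
  · rintro ⟨hx, hx0⟩
    exact hg2 x hx hx0

/-- Covering lemma for star subdivisions. -/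
lemma star_cover {σ : Set (V n)} (hp : IsPolyCone σ) (hs : StronglyConvex σ)
    {v : V n} (hv : v ∈ σ) (hv0 : v ≠ 0) {x : V n} (hx : x ∈ σ) :
    ∃ ξ, IsFaceOf ξ σ ∧ v ∉ ξ ∧ ∃ y ∈ ξ, ∃ t : ℚ, 0 ≤ t ∧ x = y + t • v := by
  classical
  obtain ⟨M, hM⟩ := hp.exists_hrep
  set Mp := M.filter (fun m => 0 < m v) with hMp
  have hP : Mp.Nonempty := by
    by_contra hP
    rw [Finset.not_nonempty_iff_eq_empty] at hP
    have hneg : -v ∈ σ := by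
      rw [hM]
      intro m hm
      have h1 : 0 ≤ m v := by rw [hM] at hv; exact hv m hm
      have h2 : ¬ (0 < m v) := by
        intro hgt
        have : m ∈ Mp := Finset.mem_filter.mpr ⟨hm, hgt⟩
        rw [hP] at this
        exact absurd this (Finset.notMem_empty m)
      have : m v = 0 := le_antisymm (not_lt.mp h2) h1
      rw [map_neg, this, neg_zero]
    exact hv0 (hs v hv hneg)
  set t : ℚ := (Mp.image (fun m => m x / m v)).min' (hP.image _) with htdef
  obtain ⟨m₀, hm₀Mp, hm₀⟩ : ∃ m₀ ∈ Mp, m₀ x / m₀ v = t := by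
    have := (Mp.image (fun m => m x / m v)).min'_mem (hP.image _)
    rw [← htdef] at this
    obtain ⟨m₀, hm₀, h⟩ := Finset.mem_image.mp this
    exact ⟨m₀, hm₀, h⟩
  have hm₀M : m₀ ∈ M := (Finset.mem_filter.mp hm₀Mp).1
  have hm₀v : 0 < m₀ v := (Finset.mem_filter.mp hm₀Mp).2
  have ht0 : 0 ≤ t := by
    rw [← hm₀]
    have : 0 ≤ m₀ x := by rw [hM] at hx; exact hx m₀ hm₀M
    exact div_nonneg this (le_of_lt hm₀v)
  have hy : x - t • v ∈ σ := by
    rw [hM]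
    intro m hm
    rw [map_sub, map_smul, smul_eq_mul]
    have hmx : 0 ≤ m x := by rw [hM] at hx; exact hx m hm
    have hmv : 0 ≤ m v := by rw [hM] at hv; exact hv m hm
    rcases lt_or_eq_of_le hmv with hpos | heq
    · have hle : t ≤ m x / m v := Finset.min'_le _ _
        (Finset.mem_image_of_mem _ (Finset.mem_filter.mpr ⟨hm, hpos⟩))
      rw [le_div_iff₀ hpos] at hle
      linarith
    · rw [← heq, mul_zero, sub_zero]; exact hmx
  refine ⟨{z | z ∈ σ ∧ m₀ z = 0}, ⟨m₀, fun z hz => by rw [hM] at hz; exact hz m₀ hm₀M, rfl⟩, ?_, ⟨x - t • v, ⟨hy, ?_⟩, t, ht0, by abel⟩⟩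
  · rintro ⟨_, hv0'⟩
    rw [hv0'] at hm₀v
    exact lt_irrefl 0 hm₀v
  · rw [map_sub, map_smul, smul_eq_mul]
    rw [← hm₀]
    field_simp
    ring

end AuxHRep
section AuxJoin

lemma mem_join {ξ ρ : Set (V n)} (hξ : coneHull ξ = ξ) (hρ : coneHull ρ = ρ) {x : V n} :
    x ∈ coneHull (ξ ∪ ρ) ↔ ∃ y ∈ ξ, ∃ z ∈ ρ, x = y + z := by
  rw [mem_coneHull_union_iff, hξ, hρ]

/-- Membership in a join with a ray. -/
lemma mem_join_ray {ξ : Set (V n)} (hξ : coneHull ξ = ξ) {v x : V n} :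
    x ∈ coneHull (ξ ∪ coneHull {v}) ↔ ∃ y ∈ ξ, ∃ t : ℚ, 0 ≤ t ∧ x = y + t • v := by
  rw [mem_join hξ (coneHull_coneHull _)]
  constructor
  · rintro ⟨y, hy, z, hz, rfl⟩
    obtain ⟨t, ht, rfl⟩ := mem_coneHull_singleton_iff.mp hz
    exact ⟨y, hy, t, ht, rfl⟩
  · rintro ⟨y, hy, t, ht, rfl⟩
    exact ⟨y, hy, t • v, mem_coneHull_singleton_iff.mpr ⟨t, ht, rfl⟩, rfl⟩

lemma join_subset {ξ ρ σ : Set (V n)} (hσ : IsPolyCone σ) (h1 : ξ ⊆ σ) (h2 : ρ ⊆ σ) :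
    coneHull (ξ ∪ ρ) ⊆ σ :=
  coneHull_subset_of_closed hσ.zero_mem (fun x hx y hy => hσ.add_mem hx hy)
    (fun c hc x hx => hσ.smul_mem hc hx) (Set.union_subset h1 h2)

/-- In a fan, a one-dimensional cone contained in another cone is a face of it. -/
lemma ray_face_of_subset {Y : Set (Set (V n))} (hY : IsFan Y) {ν σ : Set (V n)}
    (hν : ν ∈ Y) (hσ : σ ∈ Y) (hsub : ν ⊆ σ) : IsFaceOf ν σ := by
  have := (hY.2.2.2 ν hν σ hσ).2
  rwa [Set.inter_eq_self_of_subset_left hsub] at this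

lemma not_mem_span_face {σ ξ : Set (V n)} (hσ : IsPolyCone σ) (hξ : IsFaceOf ξ σ)
    {v : V n} (hv : v ∈ σ) (hvξ : v ∉ ξ) : v ∉ Submodule.span ℚ ξ := by
  intro hvspan
  obtain ⟨g, hg, hξeq⟩ := hξ
  have hker : Submodule.span ℚ ξ ≤ LinearMap.ker g := by
    rw [Submodule.span_le]
    intro y hy
    rw [hξeq] at hy
    exact hy.2
  have : g v = 0 := hker hvspan
  exact hvξ (hξeq ▸ ⟨hv, this⟩)

lemma coneHull_cut_eq {ξ : Set (V n)} (hξ : coneHull ξ = ξ) (m : (V n) →ₗ[ℚ] ℚ) :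
    coneHull {y ∈ ξ | m y = 0} = {y ∈ ξ | m y = 0} := by
  apply coneHull_eq_self
  · exact ⟨by rw [← hξ]; exact zero_mem_coneHull _, by simp⟩
  · rintro x ⟨hx, hx0⟩ y ⟨hy, hy0⟩
    exact ⟨by rw [← hξ] at hx hy ⊢; exact add_mem_coneHull hx hy,
      by rw [map_add, hx0, hy0, add_zero]⟩
  · rintro c hc x ⟨hx, hx0⟩
    exact ⟨by rw [← hξ] at hx ⊢; exact smul_mem_coneHull hc hx,
      by rw [map_smul, hx0, smul_zero]⟩

/-- Description of the faces of a join with a ray: the case where the cutting functional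
vanishes on the ray. -/
lemma join_face_desc_zero {ξ : Set (V n)} (hξhull : coneHull ξ = ξ) {v : V n}
    {m : (V n) →ₗ[ℚ] ℚ} (hmv : m v = 0) :
    {x ∈ coneHull (ξ ∪ coneHull {v}) | m x = 0}
      = coneHull ({y ∈ ξ | m y = 0} ∪ coneHull {v}) := by
  ext x
  constructor
  · rintro ⟨hx, hx0⟩
    obtain ⟨y, hy, t, ht, rfl⟩ := (mem_join_ray hξhull).mp hx
    have hmy : m y = 0 := by
      rw [map_add, map_smul, smul_eq_mul, hmv, mul_zero, add_zero] at hx0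
      exact hx0
    exact (mem_join_ray (coneHull_cut_eq hξhull m)).mpr ⟨y, ⟨hy, hmy⟩, t, ht, rfl⟩
  · intro hx
    have hsub : {y ∈ ξ | m y = 0} ⊆ ξ := fun y hy => hy.1
    have hx' : x ∈ coneHull (ξ ∪ coneHull {v}) :=
      coneHull_mono (Set.union_subset_union_left _ hsub) hx
    refine ⟨hx', ?_⟩
    obtain ⟨y, hy, t, ht, rfl⟩ := (mem_join_ray (coneHull_cut_eq hξhull m)).mp hx
    rw [map_add, map_smul, smul_eq_mul, hmv, mul_zero, add_zero]
    exact hy.2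

/-- The case where the cutting functional is positive on the ray generator. -/
lemma join_face_desc_pos {ξ : Set (V n)} (hξhull : coneHull ξ = ξ) {v : V n}
    {m : (V n) →ₗ[ℚ] ℚ} (hmv : 0 < m v) (hmξ : ∀ y ∈ ξ, 0 ≤ m y) :
    {x ∈ coneHull (ξ ∪ coneHull {v}) | m x = 0} = {y ∈ ξ | m y = 0} := by
  ext x
  constructor
  · rintro ⟨hx, hx0⟩
    obtain ⟨y, hy, t, ht, rfl⟩ := (mem_join_ray hξhull).mp hx
    rw [map_add, map_smul, smul_eq_mul] at hx0
    have h1 : 0 ≤ m y := hmξ y hy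
    have h2 : 0 ≤ t * m v := mul_nonneg ht (le_of_lt hmv)
    have hmy : m y = 0 := by linarith
    have ht0 : t = 0 := by
      have : t * m v = 0 := by linarith
      rcases mul_eq_zero.mp this with h | h
      · exact h
      · exact absurd h (ne_of_gt hmv)
    rw [ht0, zero_smul, add_zero]
    exact ⟨hy, hmy⟩
  · rintro ⟨hy, hmy⟩
    exact ⟨coneHull_mono Set.subset_union_left (mem_coneHull_of_mem hy), hmy⟩

end AuxJoin
section AuxConeSet

/-- Auxiliary: subsets closed under the cone operations. -/
def ConeSet (C : Set (V n)) : Prop :=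
  (0:V n) ∈ C ∧ (∀ x ∈ C, ∀ y ∈ C, x + y ∈ C) ∧ (∀ c : ℚ, 0 ≤ c → ∀ x ∈ C, c • x ∈ C)

lemma ConeSet.coneHull_eq {C : Set (V n)} (h : ConeSet C) : coneHull C = C :=
  coneHull_eq_self h.1 h.2.1 h.2.2

lemma coneSet_of_coneHull_eq {C : Set (V n)} (h : coneHull C = C) : ConeSet C :=
  ⟨h ▸ zero_mem_coneHull C, fun x hx y hy => h ▸ add_mem_coneHull (h.symm ▸ hx) (h.symm ▸ hy),
    fun c hc x hx => h ▸ smul_mem_coneHull hc (h.symm ▸ hx)⟩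

lemma IsPolyCone.coneSet {σ : Set (V n)} (h : IsPolyCone σ) : ConeSet σ :=
  coneSet_of_coneHull_eq h.coneHull_eq

lemma ConeSet.inter {C D : Set (V n)} (hC : ConeSet C) (hD : ConeSet D) : ConeSet (C ∩ D) :=
  ⟨⟨hC.1, hD.1⟩, fun x hx y hy => ⟨hC.2.1 x hx.1 y hy.1, hD.2.1 x hx.2 y hy.2⟩,
    fun c hc x hx => ⟨hC.2.2 c hc x hx.1, hD.2.2 c hc x hx.2⟩⟩

lemma IsFaceOf.coneSet {F σ : Set (V n)} (hσ : ConeSet σ) (h : IsFaceOf F σ) : ConeSet F := by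
  obtain ⟨m, hm, rfl⟩ := h
  refine ⟨⟨hσ.1, by simp⟩, ?_, ?_⟩
  · rintro x ⟨hx, hx0⟩ y ⟨hy, hy0⟩
    exact ⟨hσ.2.1 x hx y hy, by rw [map_add, hx0, hy0, add_zero]⟩
  · rintro c hc x ⟨hx, hx0⟩
    exact ⟨hσ.2.2 c hc x hx, by rw [map_smul, hx0, smul_zero]⟩

lemma coneHull_union_coneHull (A B : Set (V n)) :
    coneHull (coneHull A ∪ coneHull B) = coneHull (A ∪ B) := by
  ext x
  rw [mem_coneHull_union_iff, mem_coneHull_union_iff, coneHull_coneHull, coneHull_coneHull]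

/-- Two rays one contained in the other are equal. -/
lemma ray_eq_of_subset {ρ ν : Set (V n)} (hρp : IsPolyCone ρ) (hρs : StronglyConvex ρ)
    (hρd : coneDim ρ = 1) {v : V n} (hv0 : v ≠ 0) (hνgen : ν = coneHull {v})
    (hsub : ν ⊆ ρ) : ρ = ν := by
  obtain ⟨u, hu0, hρgen⟩ := ray_exists_gen hρp hρs hρd
  have hvρ : v ∈ ρ := hsub (hνgen ▸ mem_ray_self)
  rw [hρgen] at hvρ
  obtain ⟨t, ht, hveq⟩ := mem_coneHull_singleton_iff.mp hvρ
  have ht0 : t ≠ 0 := by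
    rintro rfl
    rw [zero_smul] at hveq
    exact hv0 hveq
  have huν : u ∈ ν := by
    rw [hνgen]
    apply mem_coneHull_singleton_iff.mpr ⟨t⁻¹, by positivity, ?_⟩
    rw [hveq, smul_smul, inv_mul_cancel₀ ht0, one_smul]
  apply Set.Subset.antisymm ?_ hsub
  rw [hρgen, hνgen]
  apply coneHull_subset_of_closed (zero_mem_coneHull _)
    (fun a ha b hb => add_mem_coneHull ha hb) (fun c hc a ha => smul_mem_coneHull hc ha)
  intro z hz
  rw [Set.mem_singleton_iff] at hz
  subst hz
  rw [hνgen] at huν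
  exact huν

lemma mem_starSubdiv_iff {Y : Set (Set (V n))} {ν τ : Set (V n)} :
    τ ∈ starSubdiv Y ν ↔ (τ ∈ Y ∧ ¬ ν ⊆ τ) ∨
      (∃ σ₁ ∈ Y, ν ⊆ σ₁ ∧ ∃ ξ, IsFaceOf ξ σ₁ ∧ ¬ ν ⊆ ξ ∧ τ = coneHull (ξ ∪ ν)) :=
  Iff.rfl

end AuxConeSet
section AuxStar

variable {Y : Set (Set (V n))} {ν : Set (V n)} {v : V n}

/-- Structure of members of a star subdivision. -/
lemma starSubdiv_cases (hY : IsFan Y) (hv0 : v ≠ 0) (hνgen : ν = coneHull {v})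
    {τ : Set (V n)} (hτ : τ ∈ starSubdiv Y ν) :
    (τ ∈ Y ∧ ¬ ν ⊆ τ) ∨
    (∃ σ₁ ∈ Y, ν ⊆ σ₁ ∧ ∃ ξ, IsFaceOf ξ σ₁ ∧ ¬ ν ⊆ ξ ∧ τ = coneHull (ξ ∪ ν) ∧
      v ∉ ξ ∧ v ∉ Submodule.span ℚ ξ ∧ coneHull ξ = ξ ∧ IsPolyCone τ ∧ τ ⊆ σ₁ ∧
      ξ ∈ Y ∧ ν ⊆ τ ∧ ξ ⊆ τ) := by
  rcases hτ with h | ⟨σ₁, hσ₁, hνσ₁, ξ, hξface, hnνξ, rfl⟩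
  · exact Or.inl h
  · have hvν : v ∈ ν := hνgen ▸ mem_ray_self
    have hσ₁poly : IsPolyCone σ₁ := (hY.2.1 σ₁ hσ₁).1
    have hξY : ξ ∈ Y := hY.2.2.1 σ₁ hσ₁ ξ hξface
    have hξpoly : IsPolyCone ξ := hσ₁poly.face hξface
    have hξhull : coneHull ξ = ξ := hξpoly.coneHull_eq
    have hvξ : v ∉ ξ := by
      intro hv
      apply hnνξ
      rw [hνgen, ← hξhull]
      exact coneHull_mono (Set.singleton_subset_iff.mpr hv)
    have hvspan : v ∉ Submodule.span ℚ ξ :=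
      not_mem_span_face hσ₁poly hξface (hνσ₁ hvν) hvξ
    have hτpoly : IsPolyCone (coneHull (ξ ∪ ν)) := by
      obtain ⟨Sξ, hSξ⟩ := hξpoly
      refine ⟨insert v Sξ, ?_⟩
      rw [hSξ, hνgen, coneHull_union_coneHull, Finset.coe_insert, Set.insert_eq, Set.union_comm]
    refine Or.inr ⟨σ₁, hσ₁, hνσ₁, ξ, hξface, hnνξ, rfl, hvξ, hvspan, hξhull, hτpoly,
      join_subset hσ₁poly hξface.subset hνσ₁, hξY, ?_, ?_⟩
  
    · exact fun z hz => mem_coneHull_of_mem (Or.inr hz)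
    · exact fun z hz => mem_coneHull_of_mem (Or.inl hz)

/-- The main structural theorem for star subdivisions. -/
theorem starSubdiv_props (hY : IsFan Y) (hνY : ν ∈ Y) (hνdim : coneDim ν = 1) :
    IsFan (starSubdiv Y ν) ∧ support (starSubdiv Y ν) = support Y ∧
      (∀ τ ∈ starSubdiv Y ν, ∃ σ ∈ Y, τ ⊆ σ) := by
  obtain ⟨hνpoly, hνstr⟩ := hY.2.1 ν hνY
  obtain ⟨v, hv0, hνgen⟩ := ray_exists_gen hνpoly hνstr hνdim
  have hvν : v ∈ ν := hνgen ▸ mem_ray_self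
  have hcases := fun {τ} (h : τ ∈ starSubdiv Y ν) => starSubdiv_cases hY hv0 hνgen h
  -- containment
  have hcont : ∀ τ ∈ starSubdiv Y ν, ∃ σ ∈ Y, τ ⊆ σ := by
    intro τ hτ
    rcases hcases hτ with ⟨hτY, _⟩ | ⟨σ₁, hσ₁, _, ξ, _, _, _, _, _, _, _, hsub, _, _, _⟩
    · exact ⟨τ, hτY, subset_rfl⟩
    · exact ⟨σ₁, hσ₁, hsub⟩
  have hpoly : ∀ τ ∈ starSubdiv Y ν, IsPolyCone τ := by
    intro τ hτ
    rcases hcases hτ with ⟨hτY, _⟩ | ⟨_, _, _, _, _, _, _, _, _, _, hp, _, _, _, _⟩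
    · exact (hY.2.1 τ hτY).1
    · exact hp
  have hstr : ∀ τ ∈ starSubdiv Y ν, StronglyConvex τ := by
    intro τ hτ
    obtain ⟨σ, hσ, hsub⟩ := hcont τ hτ
    exact ((hY.2.1 σ hσ).2).mono hsub
  -- support
  have hsupp : support (starSubdiv Y ν) = support Y := by
    apply Set.Subset.antisymm
    · rintro x ⟨τ, hτ, hx⟩
      obtain ⟨σ, hσ, hsub⟩ := hcont τ hτ
      exact ⟨σ, hσ, hsub hx⟩
    · rintro x ⟨σ, hσ, hx⟩
      by_cases hns : ν ⊆ σ
      · obtain ⟨ξ, hξface, hvξ, y, hy, t, ht, rfl⟩ :=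
          star_cover (hY.2.1 σ hσ).1 (hY.2.1 σ hσ).2 (hns hvν) hv0 hx
        have hξhull : coneHull ξ = ξ := ((hY.2.1 σ hσ).1.face hξface).coneHull_eq
        have hnν : ¬ ν ⊆ ξ := fun hn => hvξ (hn hvν)
        refine ⟨coneHull (ξ ∪ ν), Or.inr ⟨σ, hσ, hns, ξ, hξface, hnν, rfl⟩, ?_⟩
        rw [hνgen]
        exact (mem_join_ray hξhull).mpr ⟨y, hy, t, ht, rfl⟩
      · exact ⟨σ, Or.inl ⟨hσ, hns⟩, hx⟩
  -- finiteness
  have hfin : (starSubdiv Y ν).Finite := by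
    apply Set.Finite.subset (Set.Finite.union hY.1 (Set.Finite.biUnion hY.1
      (fun σ hσ => Set.Finite.image (fun ξ => coneHull (ξ ∪ ν)) ((hY.2.1 σ hσ).1.faces_finite))))
    intro τ hτ
    rcases hτ with h | ⟨σ₁, hσ₁, _, ξ, hξface, _, rfl⟩
    · exact Set.mem_union_left _ h.1
    · exact Set.mem_union_right _ (Set.mem_biUnion hσ₁ ⟨ξ, hξface, rfl⟩)
  -- face closure
  have hfaceclosed : ∀ τ ∈ starSubdiv Y ν, ∀ F, IsFaceOf F τ → F ∈ starSubdiv Y ν := by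
    intro τ hτ F hF
    rcases hcases hτ with ⟨hτY, hnν⟩ |
      ⟨σ₁, hσ₁, hνσ₁, ξ, hξface, hnνξ, rfl, hvξ, hvspan, hξhull, hτpoly, hτsub, hξY, hντ, hξτ⟩
    · exact Or.inl ⟨hY.2.2.1 τ hτY F hF, fun h => hnν (h.trans hF.subset)⟩
    · obtain ⟨m, hm, rfl⟩ := hF
      have hmξ : ∀ y ∈ ξ, 0 ≤ m y := fun y hy => hm y (hξτ hy)
      have hmv : 0 ≤ m v := hm v (hντ hvν)
      rcases lt_or_eq_of_le hmv with hpos | hzero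
      · have heq : {x ∈ coneHull (ξ ∪ ν) | m x = 0} = {y ∈ ξ | m y = 0} := by
          rw [hνgen]
          exact join_face_desc_pos hξhull hpos hmξ
        have hface : IsFaceOf {y ∈ ξ | m y = 0} ξ := ⟨m, hmξ, rfl⟩
        have hmem : {y ∈ ξ | m y = 0} ∈ Y := hY.2.2.1 ξ hξY _ hface
        rw [heq]
        refine Or.inl ⟨hmem, fun hsub => hvξ (hsub hvν).1⟩
      · have heq : {x ∈ coneHull (ξ ∪ ν) | m x = 0} = coneHull ({y ∈ ξ | m y = 0} ∪ ν) := by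
          rw [hνgen]
          exact join_face_desc_zero hξhull hzero.symm
        rw [heq]
        refine Or.inr ⟨σ₁, hσ₁, hνσ₁, {y ∈ ξ | m y = 0},
          IsFaceOf.trans (hY.2.1 σ₁ hσ₁).1 ⟨m, hmξ, rfl⟩ hξface, fun hsub => hvξ (hsub hvν).1, rfl⟩
  -- pairwise intersections
  have hint : ∀ σa ∈ starSubdiv Y ν, ∀ σb ∈ starSubdiv Y ν, IsFaceOf (σa ∩ σb) σa := by
    intro σa ha σb hb
    rcases hcases ha with ⟨haY, hnνa⟩ |
      ⟨σ₁, hσ₁, hνσ₁, ξ₁, hξ₁face, hnνξ₁, haeq, hvξ₁, hvspan₁, hξ₁hull, hapoly, hasub, hξ₁Y, hνa, hξ₁a⟩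
    · rcases hcases hb with ⟨hbY, hnνb⟩ |
        ⟨σ₂, hσ₂, hνσ₂, ξ₂, hξ₂face, hnνξ₂, hbeq, hvξ₂, hvspan₂, hξ₂hull, hbpoly, hbsub, hξ₂Y, hνb, hξ₂b⟩
      · exact (hY.2.2.2 σa haY σb hbY).1
      · -- old ∩ join
        obtain ⟨mF, hmF, hFeq⟩ := (hY.2.2.2 σa haY σ₂ hσ₂).2
        have hmFvpos : 0 < mF v := by
          rcases lt_or_eq_of_le (hmF v (hνσ₂ hvν)) with h | h
          · exact h
          · exfalso
            apply hnνa
            have hvmem : v ∈ σa ∩ σ₂ := by rw [hFeq]; exact ⟨hνσ₂ hvν, h.symm⟩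
            have : ν ⊆ σa := by
              rw [hνgen]
              apply coneHull_subset_of_closed ((hY.2.1 σa haY).1.coneSet).1
                ((hY.2.1 σa haY).1.coneSet).2.1 ((hY.2.1 σa haY).1.coneSet).2.2
              simpa using hvmem.1
            exact this
        have hclaim : σa ∩ σb = ξ₂ ∩ σa := by
          apply Set.Subset.antisymm
          · rintro x ⟨hxa, hxb⟩
            have hxF : mF x = 0 := by
              have : x ∈ σa ∩ σ₂ := ⟨hxa, hbsub hxb⟩
              rw [hFeq] at this
              exact this.2
            rw [hbeq, hνgen] at hxb
            obtain ⟨y, hy, t, ht, rfl⟩ := (mem_join_ray hξ₂hull).mp hxb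
            have hyσ₂ : y ∈ σ₂ := hξ₂face.subset hy
            have h1 : 0 ≤ mF y := hmF y hyσ₂
            have h2 : 0 ≤ t * mF v := mul_nonneg ht (le_of_lt hmFvpos)
            rw [map_add, map_smul, smul_eq_mul] at hxF
            have ht0 : t = 0 := by
              have htmv : t * mF v = 0 := by linarith
              rcases mul_eq_zero.mp htmv with h | h
              · exact h
              · exact absurd h (ne_of_gt hmFvpos)
            rw [ht0, zero_smul, add_zero]
            rw [ht0, zero_smul, add_zero] at hxa
            exact ⟨hy, hxa⟩
          · rintro y ⟨hyξ₂, hya⟩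
            exact ⟨hya, hbeq ▸ hξ₂b hyξ₂⟩
        rw [hclaim, Set.inter_comm ξ₂ σa, ← Set.inter_comm ξ₂ σa]
        rw [Set.inter_comm ξ₂ σa] at *
        have := (hY.2.2.2 ξ₂ hξ₂Y σa haY).2
        rwa [Set.inter_comm ξ₂ σa] at this
    · rcases hcases hb with ⟨hbY, hnνb⟩ |
        ⟨σ₂, hσ₂, hνσ₂, ξ₂, hξ₂face, hnνξ₂, hbeq, hvξ₂, hvspan₂, hξ₂hull, hbpoly, hbsub, hξ₂Y, hνb, hξ₂b⟩
      · -- join ∩ old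
        obtain ⟨mF, hmF, hFeq⟩ := (hY.2.2.2 σb hbY σ₁ hσ₁).2
        have hmFvpos : 0 < mF v := by
          rcases lt_or_eq_of_le (hmF v (hνσ₁ hvν)) with h | h
          · exact h
          · exfalso
            apply hnνb
            have hvmem : v ∈ σb ∩ σ₁ := by rw [hFeq]; exact ⟨hνσ₁ hvν, h.symm⟩
            rw [hνgen]
            apply coneHull_subset_of_closed ((hY.2.1 σb hbY).1.coneSet).1
              ((hY.2.1 σb hbY).1.coneSet).2.1 ((hY.2.1 σb hbY).1.coneSet).2.2
            simpa using hvmem.1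
        refine ⟨mF, fun x hx => hmF x (hasub hx), ?_⟩
        apply Set.Subset.antisymm
        · rintro x ⟨hxa, hxb⟩
          refine ⟨hxa, ?_⟩
          have : x ∈ σb ∩ σ₁ := ⟨hxb, hasub hxa⟩
          rw [hFeq] at this
          exact this.2
        · rintro x ⟨hxa, hx0⟩
          refine ⟨hxa, ?_⟩
          rw [haeq, hνgen] at hxa
          obtain ⟨y, hy, t, ht, rfl⟩ := (mem_join_ray hξ₁hull).mp hxa
          have hyσ₁ : y ∈ σ₁ := hξ₁face.subset hy
          have h1 : 0 ≤ mF y := hmF y hyσ₁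
          have h2 : 0 ≤ t * mF v := mul_nonneg ht (le_of_lt hmFvpos)
          rw [map_add, map_smul, smul_eq_mul] at hx0
          have ht0 : t = 0 := by
            have htmv : t * mF v = 0 := by linarith
            rcases mul_eq_zero.mp htmv with h | h
            · exact h
            · exact absurd h (ne_of_gt hmFvpos)
          have hmFy : mF y = 0 := by linarith
          rw [ht0, zero_smul, add_zero]
          have : y ∈ σb ∩ σ₁ := by rw [hFeq]; exact ⟨hyσ₁, hmFy⟩
          exact this.1
      · -- join ∩ join
        obtain ⟨mF, hmF, hFeq⟩ := (hY.2.2.2 σ₁ hσ₁ σ₂ hσ₂).1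
        obtain ⟨mG, hmG, hFeq₂⟩ := (hY.2.2.2 σ₁ hσ₁ σ₂ hσ₂).2
        set F := σ₁ ∩ σ₂ with hFdef
        have hνF : ν ⊆ F := Set.subset_inter hνσ₁ hνσ₂
        have hmFv : mF v = 0 := by
          have := hνF hvν
          rw [hFeq] at this
          exact this.2
        have hmGv : mG v = 0 := by
          have := hνF hvν
          rw [hFeq₂] at this
          exact this.2
        obtain ⟨m₁, hm₁, hξ₁eq⟩ := hξ₁face
        obtain ⟨m₂, hm₂, hξ₂eq⟩ := hξ₂face
        have hFσ₂ : F ⊆ σ₂ := Set.inter_subset_right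
        have hFσ₁ : F ⊆ σ₁ := Set.inter_subset_left
        set D := (ξ₁ ∩ F) ∩ (ξ₂ ∩ F) with hDdef
        have hFcs : ConeSet F := ((hY.2.1 σ₁ hσ₁).1.coneSet).inter ((hY.2.1 σ₂ hσ₂).1.coneSet)
        have hξ₁cs : ConeSet ξ₁ := coneSet_of_coneHull_eq hξ₁hull
        have hξ₂cs : ConeSet ξ₂ := coneSet_of_coneHull_eq hξ₂hull
        have hDcs : ConeSet D := (hξ₁cs.inter hFcs).inter (hξ₂cs.inter hFcs)
        have hG1cs : ConeSet (ξ₁ ∩ F) := hξ₁cs.inter hFcs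
        -- decompositions of elements
        have hdeca : ∀ x ∈ σa, ∃ y ∈ ξ₁, ∃ t : ℚ, 0 ≤ t ∧ x = y + t • v := by
          intro x hx
          rw [haeq, hνgen] at hx
          exact (mem_join_ray hξ₁hull).mp hx
        have hdecb : ∀ x ∈ σb, ∃ y ∈ ξ₂, ∃ t : ℚ, 0 ≤ t ∧ x = y + t • v := by
          intro x hx
          rw [hbeq, hνgen] at hx
          exact (mem_join_ray hξ₂hull).mp hx
        have hm₁ξ₁ : ∀ y ∈ ξ₁, m₁ y = 0 := by
          intro y hy; rw [hξ₁eq] at hy; exact hy.2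
        have hm₂ξ₂ : ∀ y ∈ ξ₂, m₂ y = 0 := by
          intro y hy; rw [hξ₂eq] at hy; exact hy.2
        have hclaimB : σa ∩ σb = coneHull (D ∪ ν) := by
          apply Set.Subset.antisymm
          · rintro x ⟨hxa, hxb⟩
            obtain ⟨y₁, hy₁, t₁, ht₁, hxe₁⟩ := hdeca x hxa
            obtain ⟨y₂, hy₂, t₂, ht₂, hxe₂⟩ := hdecb x hxb
            have hxF : x ∈ F := ⟨hasub hxa, hbsub hxb⟩
            have hmFx : mF x = 0 := by rw [hFeq] at hxF; exact hxF.2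
            have hy₁σ₁ : y₁ ∈ σ₁ := by rw [hξ₁eq] at hy₁; exact hy₁.1
            have hy₂σ₂ : y₂ ∈ σ₂ := by rw [hξ₂eq] at hy₂; exact hy₂.1
            have hmFy₁ : mF y₁ = 0 := by
              have : mF x = mF y₁ + t₁ * mF v := by rw [hxe₁, map_add, map_smul, smul_eq_mul]
              rw [hmFv, mul_zero, add_zero] at this
              rw [← this, hmFx]
            have hy₁F : y₁ ∈ F := by rw [hFeq]; exact ⟨hy₁σ₁, hmFy₁⟩
            have hmGx : mG x = 0 := by rw [hFeq₂] at hxF; exact hxF.2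
            have hmGy₂ : mG y₂ = 0 := by
              have : mG x = mG y₂ + t₂ * mG v := by rw [hxe₂, map_add, map_smul, smul_eq_mul]
              rw [hmGv, mul_zero, add_zero] at this
              rw [← this, hmGx]
            have hy₂F : y₂ ∈ F := by rw [hFeq₂]; exact ⟨hy₂σ₂, hmGy₂⟩
            rw [hνgen]
            by_cases hm₂v : m₂ v = 0
            · have hm₂x : m₂ x = 0 := by
                rw [hxe₂, map_add, map_smul, smul_eq_mul, hm₂ξ₂ y₂ hy₂, hm₂v, mul_zero, add_zero]
              have hm₂y₁ : m₂ y₁ = 0 := by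
                have : m₂ x = m₂ y₁ + t₁ * m₂ v := by rw [hxe₁, map_add, map_smul, smul_eq_mul]
                rw [hm₂v, mul_zero, add_zero] at this
                rw [← this, hm₂x]
              have hy₁ξ₂ : y₁ ∈ ξ₂ := by rw [hξ₂eq]; exact ⟨hFσ₂ hy₁F, hm₂y₁⟩
              exact (mem_join_ray hDcs.coneHull_eq).mpr
                ⟨y₁, ⟨⟨hy₁, hy₁F⟩, ⟨hy₁ξ₂, hy₁F⟩⟩, t₁, ht₁, hxe₁⟩
            · by_cases hm₁v : m₁ v = 0
              · have hm₁x : m₁ x = 0 := by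
                  rw [hxe₁, map_add, map_smul, smul_eq_mul, hm₁ξ₁ y₁ hy₁, hm₁v, mul_zero, add_zero]
                have hm₁y₂ : m₁ y₂ = 0 := by
                  have : m₁ x = m₁ y₂ + t₂ * m₁ v := by rw [hxe₂, map_add, map_smul, smul_eq_mul]
                  rw [hm₁v, mul_zero, add_zero] at this
                  rw [← this, hm₁x]
                have hy₂ξ₁ : y₂ ∈ ξ₁ := by rw [hξ₁eq]; exact ⟨hFσ₁ hy₂F, hm₁y₂⟩
                exact (mem_join_ray hDcs.coneHull_eq).mpr
                  ⟨y₂, ⟨⟨hy₂ξ₁, hy₂F⟩, ⟨hy₂, hy₂F⟩⟩, t₂, ht₂, hxe₂⟩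
              · have hm₁vpos : 0 < m₁ v := lt_of_le_of_ne (hm₁ v (hνσ₁ hvν)) (Ne.symm hm₁v)
                have hm₂vpos : 0 < m₂ v := lt_of_le_of_ne (hm₂ v (hνσ₂ hvν)) (Ne.symm hm₂v)
                have he12 : y₁ + t₁ • v = y₂ + t₂ • v := by rw [← hxe₁, ← hxe₂]
                have hm₂cmp : m₂ y₁ + t₁ * m₂ v = t₂ * m₂ v := by
                  have := congrArg m₂ he12
                  rw [map_add, map_add, map_smul, map_smul, smul_eq_mul, smul_eq_mul,
                    hm₂ξ₂ y₂ hy₂, zero_add] at this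
                  exact this
                have hm₁cmp : m₁ y₂ + t₂ * m₁ v = t₁ * m₁ v := by
                  have := congrArg m₁ he12.symm
                  rw [map_add, map_add, map_smul, map_smul, smul_eq_mul, smul_eq_mul,
                    hm₁ξ₁ y₁ hy₁, zero_add] at this
                  exact this
                have h1 : 0 ≤ m₂ y₁ := hm₂ y₁ (hFσ₂ hy₁F)
                have h2 : 0 ≤ m₁ y₂ := hm₁ y₂ (hFσ₁ hy₂F)
                have hle : t₁ ≤ t₂ := by nlinarith
                have hge : t₂ ≤ t₁ := by nlinarith
                have hteq : t₁ = t₂ := le_antisymm hle hge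
                have hyeq : y₁ = y₂ := by
                  have := he12
                  rw [hteq] at this
                  exact add_right_cancel this
                have hm₂y₁ : m₂ y₁ = 0 := by
                  rw [hyeq]; exact hm₂ξ₂ y₂ hy₂
                have hy₁ξ₂ : y₁ ∈ ξ₂ := by rw [hξ₂eq]; exact ⟨hFσ₂ hy₁F, hm₂y₁⟩
                exact (mem_join_ray hDcs.coneHull_eq).mpr
                  ⟨y₁, ⟨⟨hy₁, hy₁F⟩, ⟨hy₁ξ₂, hy₁F⟩⟩, t₁, ht₁, hxe₁⟩
          · apply Set.subset_inter
            · rw [haeq]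
              apply coneHull_mono
              exact Set.union_subset_union_left _ (fun y hy => hy.1.1)
            · rw [hbeq]
              apply coneHull_mono
              exact Set.union_subset_union_left _ (fun y hy => hy.2.1)
        -- G := σa ∩ F as a face of σa
        have hGeq : coneHull ((ξ₁ ∩ F) ∪ ν) = {x ∈ σa | mF x = 0} := by
          apply Set.Subset.antisymm
          · intro x hx
            rw [hνgen] at hx
            obtain ⟨y, hy, t, ht, rfl⟩ := (mem_join_ray hG1cs.coneHull_eq).mp hx
            have hmFy : mF y = 0 := by rw [hFeq] at hy; exact hy.2.2
            constructor
            · rw [haeq, hνgen]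
              exact (mem_join_ray hξ₁hull).mpr ⟨y, hy.1, t, ht, rfl⟩
            · rw [map_add, map_smul, smul_eq_mul, hmFy, hmFv, mul_zero, add_zero]
          · rintro x ⟨hxa, hx0⟩
            obtain ⟨y, hy, t, ht, rfl⟩ := hdeca x hxa
            have hmFy : mF y = 0 := by
              rw [map_add, map_smul, smul_eq_mul, hmFv, mul_zero, add_zero] at hx0
              exact hx0
            have hyσ₁ : y ∈ σ₁ := by rw [hξ₁eq] at hy; exact hy.1
            have hyF : y ∈ F := by rw [hFeq]; exact ⟨hyσ₁, hmFy⟩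
            rw [hνgen]
            exact (mem_join_ray hG1cs.coneHull_eq).mpr ⟨y, ⟨hy, hyF⟩, t, ht, rfl⟩
        have hGface : IsFaceOf (coneHull ((ξ₁ ∩ F) ∪ ν)) σa :=
          ⟨mF, fun x hx => hmF x (hasub hx), hGeq⟩
        -- σa ∩ σb as a face of G
        have hinner : IsFaceOf (σa ∩ σb) (coneHull ((ξ₁ ∩ F) ∪ ν)) := by
          have hdecG : ∀ x ∈ coneHull ((ξ₁ ∩ F) ∪ ν),
              ∃ y ∈ ξ₁ ∩ F, ∃ t : ℚ, 0 ≤ t ∧ x = y + t • v := by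
            intro x hx
            rw [hνgen] at hx
            exact (mem_join_ray hG1cs.coneHull_eq).mp hx
          by_cases hm₂v : m₂ v = 0
          · refine ⟨m₂, ?_, ?_⟩
            · intro x hx
              obtain ⟨y, hy, t, ht, rfl⟩ := hdecG x hx
              rw [map_add, map_smul, smul_eq_mul, hm₂v, mul_zero, add_zero]
              exact hm₂ y (hFσ₂ hy.2)
            · rw [hclaimB]
              apply Set.Subset.antisymm
              · intro x hx
                rw [hνgen] at hx
                obtain ⟨y, hy, t, ht, rfl⟩ := (mem_join_ray hDcs.coneHull_eq).mp hx
                refine ⟨?_, ?_⟩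
                · rw [hνgen]
                  exact (mem_join_ray hG1cs.coneHull_eq).mpr ⟨y, hy.1, t, ht, rfl⟩
                · rw [map_add, map_smul, smul_eq_mul, hm₂v, mul_zero, add_zero]
                  exact hm₂ξ₂ y hy.2.1
              · rintro x ⟨hxG, hx0⟩
                obtain ⟨y, hy, t, ht, rfl⟩ := hdecG x hxG
                have hm₂y : m₂ y = 0 := by
                  rw [map_add, map_smul, smul_eq_mul, hm₂v, mul_zero, add_zero] at hx0
                  exact hx0
                have hyξ₂ : y ∈ ξ₂ := by rw [hξ₂eq]; exact ⟨hFσ₂ hy.2, hm₂y⟩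
                rw [hνgen]
                exact (mem_join_ray hDcs.coneHull_eq).mpr ⟨y, ⟨hy, ⟨hyξ₂, hy.2⟩⟩, t, ht, rfl⟩
          · have hvspan' : v ∉ Submodule.span ℚ (ξ₁ ∩ F) := by
              intro hv
              exact hvspan₁ (Submodule.span_mono Set.inter_subset_left hv)
            obtain ⟨l, hl0, hlv⟩ := exists_dual_of_not_mem hvspan'
            refine ⟨m₂ - (m₂ v) • l, ?_, ?_⟩
            · intro x hx
              obtain ⟨y, hy, t, ht, rfl⟩ := hdecG x hx
              have hly : l y = 0 := hl0 y (Submodule.subset_span hy)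
              simp only [LinearMap.sub_apply, LinearMap.smul_apply, smul_eq_mul,
                map_add, map_smul]
              rw [hly, hlv]
              have : 0 ≤ m₂ y := hm₂ y (hFσ₂ hy.2)
              ring_nf
              nlinarith
            · rw [hclaimB]
              apply Set.Subset.antisymm
              · intro x hx
                rw [hνgen] at hx
                obtain ⟨y, hy, t, ht, rfl⟩ := (mem_join_ray hDcs.coneHull_eq).mp hx
                have hly : l y = 0 := hl0 y (Submodule.subset_span ⟨hy.1.1, hy.1.2⟩)
                refine ⟨?_, ?_⟩
                · rw [hνgen]
                  exact (mem_join_ray hG1cs.coneHull_eq).mpr ⟨y, hy.1, t, ht, rfl⟩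
                · simp only [LinearMap.sub_apply, LinearMap.smul_apply, smul_eq_mul,
                    map_add, map_smul]
                  rw [hly, hlv, hm₂ξ₂ y hy.2.1]
                  ring
              · rintro x ⟨hxG, hx0⟩
                obtain ⟨y, hy, t, ht, rfl⟩ := hdecG x hxG
                have hly : l y = 0 := hl0 y (Submodule.subset_span hy)
                have hm₂y : m₂ y = 0 := by
                  simp only [LinearMap.sub_apply, LinearMap.smul_apply, smul_eq_mul,
                    map_add, map_smul] at hx0
                  rw [hly, hlv] at hx0
                  ring_nf at hx0
                  linarith [hx0]
                have hyξ₂ : y ∈ ξ₂ := by rw [hξ₂eq]; exact ⟨hFσ₂ hy.2, hm₂y⟩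
                rw [hνgen]
                exact (mem_join_ray hDcs.coneHull_eq).mpr ⟨y, ⟨hy, ⟨hyξ₂, hy.2⟩⟩, t, ht, rfl⟩
        exact IsFaceOf.trans hapoly hinner hGface
  refine ⟨⟨hfin, fun σ hσ => ⟨hpoly σ hσ, hstr σ hσ⟩, hfaceclosed, ?_⟩, hsupp, hcont⟩
  intro σa ha σb hb
  refine ⟨hint σa ha σb hb, ?_⟩
  rw [Set.inter_comm]
  exact hint σb hb σa ha

end AuxStar
section AuxInv

lemma coneHull_union_left (A B : Set (V n)) :
    coneHull (coneHull A ∪ B) = coneHull (A ∪ B) := by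
  ext x
  rw [mem_coneHull_union_iff, mem_coneHull_union_iff, coneHull_coneHull]

/-- Face description for a decomposed cone. -/
lemma decomp_face_eq {ζ : Set (V n)} {T S : Finset (V n)}
    (hζ : ζ = coneHull (↑T : Set (V n))) {m : (V n) →ₗ[ℚ] ℚ}
    (hm : ∀ x ∈ coneHull (ζ ∪ ↑S), 0 ≤ m x) :
    {x ∈ coneHull (ζ ∪ ↑S) | m x = 0}
      = coneHull ({y ∈ ζ | m y = 0} ∪ ↑(S.filter (fun w => m w = 0))) := by
  classical
  have htot : coneHull (ζ ∪ (↑S : Set (V n))) = coneHull (↑(T ∪ S) : Set (V n)) := by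
    rw [hζ, coneHull_union_left, Finset.coe_union]
  have hm' : ∀ x ∈ coneHull (↑(T ∪ S) : Set (V n)), 0 ≤ m x := by
    rw [← htot]; exact hm
  have h1 : {x ∈ coneHull (↑(T ∪ S) : Set (V n)) | m x = 0}
      = coneHull (↑((T ∪ S).filter (fun v => m v = 0)) : Set (V n)) := face_coneHull_eq hm'
  have hζm : {y ∈ ζ | m y = 0} = coneHull (↑(T.filter (fun v => m v = 0)) : Set (V n)) := by
    rw [hζ]
    apply face_coneHull_eq
    intro x hx
    apply hm
    rw [hζ]
    exact coneHull_mono Set.subset_union_left (mem_coneHull_of_mem hx)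
  rw [htot, h1, hζm, coneHull_union_left, Finset.filter_union, Finset.coe_union]

/-- Rays of a cone avoiding a set of rays. -/
def RaysNotIn (P : Set (Set (V n))) (ζ : Set (V n)) : Prop :=
  ∀ ρ, IsRayOf ρ ζ → ρ ∉ P

/-- Decomposition of a cone as a join of an unsettled base cone with processed rays. -/
def Decomp (X₀ P : Set (Set (V n))) (τ : Set (V n)) : Prop :=
  ∃ ζ, ζ ∈ X₀ ∧ RaysNotIn P ζ ∧ ∃ S : Finset (V n),
    (∀ w ∈ S, coneHull {w} ∈ P ∧ w ≠ 0) ∧ τ = coneHull (ζ ∪ ↑S) ∧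
    (∀ x, x ∈ Submodule.span ℚ ζ → x ∈ Submodule.span ℚ (↑S : Set (V n)) → x = 0)

/-- The invariant maintained along a sequence of star subdivisions. -/
def Inv (X₀ P Y : Set (Set (V n))) : Prop :=
  IsFan Y ∧ support Y = support X₀ ∧ (∀ τ ∈ Y, ∃ σ ∈ X₀, τ ⊆ σ) ∧
  (∀ ρ ∈ raysIn X₀, ρ ∈ Y) ∧ (∀ ζ ∈ X₀, RaysNotIn P ζ → ζ ∈ Y) ∧
  (∀ τ ∈ Y, Decomp X₀ P τ)

lemma inv_base {X₀ : Set (Set (V n))} (hX₀ : IsFan X₀) : Inv X₀ ∅ X₀ := by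
  refine ⟨hX₀, rfl, fun τ hτ => ⟨τ, hτ, subset_rfl⟩, fun ρ hρ => hρ.1,
    fun ζ hζ _ => hζ, ?_⟩
  intro τ hτ
  refine ⟨τ, hτ, fun ρ _ h => h, ∅, by simp, ?_, ?_⟩
  · rw [Finset.coe_empty, Set.union_empty, (hX₀.2.1 τ hτ).1.coneHull_eq]
  · intro x _ hx
    rw [Finset.coe_empty, Submodule.span_empty] at hx
    simpa using hx

lemma inv_step {X₀ P Y : Set (Set (V n))} (hX₀ : IsFan X₀) (hInv : Inv X₀ P Y)
    {μ : Set (V n)} (hμX : μ ∈ raysIn X₀) :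
    Inv X₀ (insert μ P) (starSubdiv Y μ) := by
  obtain ⟨hY, hsup, hcont, hrays, hunset, hdec⟩ := hInv
  have hμY : μ ∈ Y := hrays μ hμX
  have hμdim : coneDim μ = 1 := hμX.2
  obtain ⟨hμpoly, hμstr⟩ := hY.2.1 μ hμY
  obtain ⟨w, hw0, hμgen⟩ := ray_exists_gen hμpoly hμstr hμdim
  have hwμ : w ∈ μ := hμgen ▸ mem_ray_self
  obtain ⟨hfan, hsupp, hcont'⟩ := starSubdiv_props hY hμY hμdim
  refine ⟨hfan, hsupp.trans hsup, ?_, ?_, ?_, ?_⟩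
  · -- containment in X₀
    intro τ hτ
    obtain ⟨σ, hσ, hsub⟩ := hcont' τ hτ
    obtain ⟨σ₀, hσ₀, hsub₀⟩ := hcont σ hσ
    exact ⟨σ₀, hσ₀, hsub.trans hsub₀⟩
  · -- rays preserved
    intro ρ hρ
    have hρY : ρ ∈ Y := hrays ρ hρ
    by_cases hμρ : μ ⊆ ρ
    · have hρeq : ρ = μ := ray_eq_of_subset (hY.2.1 ρ hρY).1 (hY.2.1 ρ hρY).2 hρ.2 hw0 hμgen hμρ
      subst hρeq
      refine Or.inr ⟨ρ, hρY, subset_rfl, {0}, zero_face hμpoly hμstr, ?_, ?_⟩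
      · intro hsub
        have := hsub hwμ
        rw [Set.mem_singleton_iff] at this
        exact hw0 this
      · have h0ρ : ({0} : Set (V n)) ∪ ρ = ρ :=
          Set.union_eq_self_of_subset_left (Set.singleton_subset_iff.mpr hμpoly.zero_mem)
        rw [h0ρ, hμpoly.coneHull_eq]
    · exact Or.inl ⟨hρY, hμρ⟩
  · -- unsettled cones preserved
    intro ζ hζ hrn
    have hζY : ζ ∈ Y := hunset ζ hζ (fun ρ hρ hρP => hrn ρ hρ (Set.mem_insert_of_mem _ hρP))
    refine Or.inl ⟨hζY, ?_⟩
    intro hμζ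
    have hμface : IsFaceOf μ ζ := ray_face_of_subset hX₀ hμX.1 hζ hμζ
    exact hrn μ ⟨hμface, hμdim⟩ (Set.mem_insert _ _)
  · -- decomposition
    intro τ hτ
    rcases starSubdiv_cases hY hw0 hμgen hτ with ⟨hτY, hnμτ⟩ |
      ⟨σ₁, hσ₁, hμσ₁, η, hηface, hnμη, rfl, hwη, hwspan, hηhull, hτpoly, hτsub, hηY, hμτ, hητ⟩
    · obtain ⟨ζ, hζX, hζrn, S, hSP, heq, hspan⟩ := hdec τ hτY
      refine ⟨ζ, hζX, ?_, S, fun w' hw' => ⟨Set.mem_insert_of_mem _ (hSP w' hw').1, (hSP w' hw').2⟩,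
        heq, hspan⟩
      intro ρ hρ hρP
      rcases Set.mem_insert_iff.mp hρP with hρμ | hρP'
      · subst hρμ
        apply hnμτ
        have : ρ ⊆ ζ := hρ.1.subset
        rw [heq]
        exact this.trans (fun z hz => mem_coneHull_of_mem (Or.inl hz))
      · exact hζrn ρ hρ hρP'
    · -- join cone
      obtain ⟨ζ, hζX, hζrn, S, hSP, heq, hspan⟩ := hdec σ₁ hσ₁
      obtain ⟨T, hT⟩ := (hX₀.2.1 ζ hζX).1
      obtain ⟨g, hg, hηeq⟩ := hηface
      rw [heq] at hg hηeq
      have hηdesc : η = coneHull ({y ∈ ζ | g y = 0} ∪ ↑(S.filter (fun w' => g w' = 0))) := by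
        rw [hηeq]
        exact decomp_face_eq hT hg
      set ζ' := {y ∈ ζ | g y = 0} with hζ'def
      set S' := S.filter (fun w' => g w' = 0) with hS'def
      have hζ'face : IsFaceOf ζ' ζ := ⟨g, fun y hy =>
        hg y (coneHull_mono Set.subset_union_left (mem_coneHull_of_mem hy)), rfl⟩
      have hζ'X : ζ' ∈ X₀ := hX₀.2.2.1 ζ hζX ζ' hζ'face
      have hwS' : w ∉ (↑S' : Set (V n)) := by
        intro hwmem
        apply hwη
        rw [hηdesc]
        exact mem_coneHull_of_mem (Or.inr hwmem)
      refine ⟨ζ', hζ'X, ?_, insert w S', ?_, ?_, ?_⟩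
      · -- rays of ζ' not in insert μ P
        intro ρ hρ hρP
        rcases Set.mem_insert_iff.mp hρP with hρμ | hρP'
        · subst hρμ
          apply hnμη
          have h1 : ρ ⊆ ζ' := hρ.1.subset
          rw [hηdesc]
          exact h1.trans (fun z hz => mem_coneHull_of_mem (Or.inl hz))
        · refine hζrn ρ ⟨?_, hρ.2⟩ hρP'
          exact IsFaceOf.trans (hX₀.2.1 ζ hζX).1 hρ.1 hζ'face
      · -- generators
        intro w' hw'
        rcases Finset.mem_insert.mp hw' with h | h
        · subst h
          exact ⟨hμgen ▸ Set.mem_insert _ _, hw0⟩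
        · have := hSP w' (Finset.mem_of_mem_filter w' h)
          exact ⟨Set.mem_insert_of_mem _ this.1, this.2⟩
      · -- the join equality
        rw [hηdesc, hμgen, coneHull_union_coneHull]
        have hsets : (ζ' ∪ (↑S' : Set (V n))) ∪ ({w} : Set (V n)) = ζ' ∪ ↑(insert w S') := by
          ext z
          simp only [Finset.coe_insert, Set.mem_union, Set.mem_insert_iff,
            Set.mem_singleton_iff, Finset.mem_coe]
          tauto
        rw [hsets]
      · -- span condition
        intro x hxζ' hxS'
        rw [Finset.coe_insert] at hxS'
        obtain ⟨a, z, hz, hxeq⟩ := Submodule.mem_span_insert.mp hxS'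
        by_cases ha : a = 0
        · subst ha
          rw [zero_smul, zero_add] at hxeq
          rw [hxeq]
          apply hspan z
          · rw [← hxeq]
            exact Submodule.span_mono (fun y hy => hy.1) hxζ'
          · exact Submodule.span_mono (by
              intro y hy
              exact Finset.mem_coe.mpr (Finset.mem_of_mem_filter y (Finset.mem_coe.mp hy))) hz
        · exfalso
          apply hwspan
          have hxspanη : x ∈ Submodule.span ℚ η := by
            rw [hηdesc]
            rw [span_coneHull]
            exact Submodule.span_mono Set.subset_union_left hxζ'
          have hzspanη : z ∈ Submodule.span ℚ η := by
            rw [hηdesc, span_coneHull]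
            exact Submodule.span_mono Set.subset_union_right hz
          have : w = a⁻¹ • (x - z) := by
            rw [hxeq]
            rw [add_sub_cancel_right, smul_smul, inv_mul_cancel₀ ha, one_smul]
          rw [this]
          exact Submodule.smul_mem _ _ (Submodule.sub_mem _ hxspanη hzspanη)

lemma inv_fold {X₀ : Set (Set (V n))} (hX₀ : IsFan X₀) :
    ∀ (L : List (Set (V n))) (P Y : Set (Set (V n))), Inv X₀ P Y →
      (∀ μ ∈ L, μ ∈ raysIn X₀) →
      Inv X₀ (P ∪ {μ | μ ∈ L}) (L.foldl starSubdiv Y) := by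
  intro L
  induction L with
  | nil =>
    intro P Y hInv _
    simpa using hInv
  | cons a l ih =>
    intro P Y hInv hL
    have hstep := inv_step hX₀ hInv (hL a (by simp))
    have := ih (insert a P) (starSubdiv Y a) hstep (fun μ hμ => hL μ (by simp [hμ]))
    have hPeq : (insert a P) ∪ {μ | μ ∈ l} = P ∪ {μ | μ ∈ a :: l} := by
      ext x
      simp [Set.mem_insert_iff, List.mem_cons, or_assoc]
      tauto
    rw [List.foldl_cons]
    rwa [hPeq] at this

end AuxInv
section AuxMain

lemma support_faces (ζ : Set (V n)) : support (faces ζ) = ζ := by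
  apply Set.Subset.antisymm
  · rintro x ⟨F, hF, hx⟩
    exact (IsFaceOf.subset hF) hx
  · intro x hx
    exact ⟨ζ, IsFaceOf.refl ζ, hx⟩

lemma restrict_fan {X' : Set (Set (V n))} (hX' : IsFan X') (ζ : Set (V n)) :
    IsFan {σ | σ ∈ X' ∧ σ ⊆ ζ} := by
  refine ⟨hX'.1.subset (fun σ hσ => hσ.1), fun σ hσ => hX'.2.1 σ hσ.1, ?_, ?_⟩
  · intro σ hσ F hF
    exact ⟨hX'.2.2.1 σ hσ.1 F hF, hF.subset.trans hσ.2⟩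
  · intro σ hσ σ' hσ'
    exact hX'.2.2.2 σ hσ.1 σ' hσ'.1

/-- The forward direction: a good function on an unsettled cone restricts to a
convex-subdivision witness. -/
lemma forward_dir {X B C H X' : Set (Set (V n))} (hFan : IsFan X) (hX'fan : IsFan X')
    (hQ : IsQuadData X B C H) {ζ : Set (V n)} (hζX : ζ ∈ X)
    (ψ : V n → ℚ) (hgood : IsGoodFor {ζ} X' ψ) (hsigned : SignedOnIn ζ X' B C H ψ) :
    IsConvexSubdiv {σ | σ ∈ X' ∧ σ ⊆ ζ} (faces ζ) B C H := by
  classical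
  obtain ⟨hconv, hlin, hmax⟩ := hgood ζ rfl
  have hζpoly : IsPolyCone ζ := (hFan.2.1 ζ hζX).1
  -- a piece inside ζ, and ψ 0 = 0
  obtain ⟨σ₀, hσ₀X, hσ₀ζ, -⟩ :=
    hmax 0 ∅ (Set.empty_subset ζ) (convex_empty) (fun x hx => absurd hx (Set.notMem_empty x))
  have hψ0 : ψ 0 = 0 := by
    obtain ⟨m, hm⟩ := hlin σ₀ hσ₀X hσ₀ζ
    rw [hm 0 (hX'fan.2.1 σ₀ hσ₀X).1.zero_mem, map_zero]
  -- covering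
  have hcover : ∀ x ∈ ζ, ∃ σ' , (σ' ∈ X' ∧ σ' ⊆ ζ) ∧ x ∈ σ' := by
    intro x hx
    by_cases hx0 : x = 0
    · exact ⟨σ₀, ⟨hσ₀X, hσ₀ζ⟩, hx0 ▸ (hX'fan.2.1 σ₀ hσ₀X).1.zero_mem⟩
    · obtain ⟨i, hi⟩ : ∃ i, x i ≠ 0 := by
        by_contra hc
        push_neg at hc
        exact hx0 (funext hc)
      set m : (V n) →ₗ[ℚ] ℚ := (ψ x / x i) • LinearMap.proj i with hmdef
      have hmx : ψ x = m x := by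
        rw [hmdef]
        simp only [LinearMap.smul_apply, LinearMap.proj_apply, smul_eq_mul]
        rw [div_mul_cancel₀ _ hi]
      obtain ⟨σ', hσ'X, hσ'ζ, hxσ'⟩ := hmax m {x} (Set.singleton_subset_iff.mpr hx)
        (convex_singleton x) (fun y hy => by rw [Set.mem_singleton_iff] at hy; rw [hy]; exact hmx)
      exact ⟨σ', ⟨hσ'X, hσ'ζ⟩, hxσ' rfl⟩
  set ψ' : V n → ℚ := fun x => if x ∈ ζ then ψ x else 0 with hψ'def
  have hψ'eq : ∀ x ∈ ζ, ψ' x = ψ x := fun x hx => if_pos hx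
  refine ⟨⟨restrict_fan hX'fan ζ, ?_, fun σ' hσ' => ⟨ζ, IsFaceOf.refl ζ, hσ'.2⟩⟩, ψ', ?_, ?_, ?_, ?_⟩
  · -- support equality
    rw [support_faces]
    apply Set.Subset.antisymm
    · rintro x ⟨σ', hσ', hx⟩
      exact hσ'.2 hx
    · intro x hx
      obtain ⟨σ', hσ', hxσ'⟩ := hcover x hx
      exact ⟨σ', hσ', hxσ'⟩
  · -- goodness on each face
    rintro F hF
    have hFζ : F ⊆ ζ := hF.subset
    have hFpoly : IsPolyCone F := hζpoly.face hF
    obtain ⟨g, hg, hFeq⟩ := hF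
    refine ⟨?_, ?_, ?_⟩
    · -- convexity
      refine ⟨hFpoly.convex, ?_⟩
      intro x hx y hy a b ha hb hab
      have hxy : a • x + b • y ∈ F := hFpoly.convex hx hy ha hb hab
      rw [hψ'eq _ (hFζ hxy), hψ'eq _ (hFζ hx), hψ'eq _ (hFζ hy)]
      exact hconv.2 (hFζ hx) (hFζ hy) ha hb hab
    · -- linearity on pieces
      intro σ' hσ' hσ'F
      obtain ⟨m, hm⟩ := hlin σ' hσ'.1 (hσ'F.trans hFζ)
      exact ⟨m, fun x hx => by rw [hψ'eq _ (hFζ (hσ'F hx))]; exact hm x hx⟩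
    · -- maximality
      intro m t htF htconv hagree
      have htζ : t ⊆ ζ := htF.trans hFζ
      obtain ⟨σ', hσ'X, hσ'ζ, htσ'⟩ := hmax m t htζ htconv
        (fun x hx => by rw [← hψ'eq _ (htζ hx)]; exact hagree x hx)
      have hface : IsFaceOf {x ∈ σ' | g x = 0} σ' := ⟨g, fun x hx => hg x (hσ'ζ hx), rfl⟩
      refine ⟨{x ∈ σ' | g x = 0}, ⟨hX'fan.2.2.1 σ' hσ'X _ hface, ?_⟩, ?_, ?_⟩
      · intro x hx
        exact hσ'ζ hx.1
      · intro x hx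
        rw [hFeq]
        exact ⟨hσ'ζ hx.1, hx.2⟩
      · intro x hx
        refine ⟨htσ' hx, ?_⟩
        have := htF hx
        rw [hFeq] at this
        exact this.2
  · -- sign: B
    intro ν' hν'B x hx
    have hν'X : ν' ∈ raysIn X := hQ.1 hν'B
    by_cases hxζ : x ∈ ζ
    · rw [hψ'def]
      simp only [if_pos hxζ]
      by_cases hν'ζ : ν' ⊆ ζ
      · exact hsigned.1 ν' hν'B hν'ζ x hx
      · have hface : IsFaceOf (ν' ∩ ζ) ν' := (hFan.2.2.2 ν' hν'X.1 ζ hζX).1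
        by_cases hx0 : x = 0
        · rw [hx0, hψ0]
        · exfalso
          have := face_of_dim_one_eq hface hν'X.2 (x := x) ⟨hx, hxζ⟩ hx0
          exact hν'ζ (this ▸ Set.inter_subset_right)
    · rw [hψ'def]
      simp only [if_neg hxζ]
      exact le_rfl
  · -- sign: C
    intro ν' hν'C x hx
    have hν'X : ν' ∈ raysIn X := hQ.2.1 hν'C
    by_cases hxζ : x ∈ ζ
    · rw [hψ'def]
      simp only [if_pos hxζ]
      by_cases hν'ζ : ν' ⊆ ζ
      · exact hsigned.2.1 ν' hν'C hν'ζ x hx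
      · have hface : IsFaceOf (ν' ∩ ζ) ν' := (hFan.2.2.2 ν' hν'X.1 ζ hζX).1
        by_cases hx0 : x = 0
        · rw [hx0, hψ0]
        · exfalso
          have := face_of_dim_one_eq hface hν'X.2 (x := x) ⟨hx, hxζ⟩ hx0
          exact hν'ζ (this ▸ Set.inter_subset_right)
    · rw [hψ'def]
      simp only [if_neg hxζ]
      exact le_rfl
  · -- sign: neutral
    intro ν' hν' hν'B hν'C hν'H x hx
    have h1 : ν' ∈ raysIn X' := ⟨hν'.1.1, hν'.2⟩
    have h2 : ν' ⊆ ζ := hν'.1.2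
    rw [hψ'def]
    simp only [if_pos (h2 hx)]
    exact hsigned.2.2 ν' h1 h2 hν'B hν'C hν'H x hx

end AuxMain
section AuxBackward

lemma sum_ite_scalar {t' t : Finset (V n)} (c : V n → ℚ) (f : V n → ℚ) (h : t' ⊆ t) :
    (∑ w ∈ t, (if w ∈ t' then c w else 0) * f w) = ∑ w ∈ t', c w * f w := by
  classical
  rw [← Finset.sum_subset h (by intro x _ hx; simp [hx])]
  exact Finset.sum_congr rfl (fun x hx => by simp [hx])

lemma backward_tau {X B C H Y E : Set (Set (V n))}
    (hFan : IsFan X) (hQ : IsQuadData X B C H)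
    (hInv : Inv X E Y)
    (hE : ∀ μ ∈ E, μ ∈ B ∪ C ∪ H)
    {ν : Set (V n)} (hνX : ν ∈ raysIn X) (hνE : ν ∉ E) (hνBCH : ν ∈ B ∪ C ∪ H)
    (hRC : ∀ ζ ∈ X, RaysNotIn E ζ →
      IsConvexSubdiv {σ | σ ∈ starSubdiv Y ν ∧ σ ⊆ ζ} (faces ζ) B C H)
    {τ : Set (V n)} (hτY : τ ∈ Y) (hντ : ν ⊆ τ) :
    ∃ ψ : V n → ℚ, IsGoodFor {τ} (starSubdiv Y ν) ψ ∧
      SignedOnIn τ (starSubdiv Y ν) B C H ψ := by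
  classical
  obtain ⟨hYfan, hYsup, hYcont, hYrays, hYunset, hYdec⟩ := hInv
  have hνY : ν ∈ Y := hYrays ν hνX
  have hνdim : coneDim ν = 1 := hνX.2
  obtain ⟨v, hv0, hνgen⟩ := ray_exists_gen (hYfan.2.1 ν hνY).1 (hYfan.2.1 ν hνY).2 hνdim
  have hvν : v ∈ ν := hνgen ▸ mem_ray_self
  have hτpoly : IsPolyCone τ := (hYfan.2.1 τ hτY).1
  obtain ⟨ζ, hζX, hζrn, S, hSgen, hτeq, hspan⟩ := hYdec τ hτY
  have hζpoly : IsPolyCone ζ := (hFan.2.1 ζ hζX).1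
  have hζhull : coneHull ζ = ζ := hζpoly.coneHull_eq
  obtain ⟨T, hT⟩ := (hFan.2.1 ζ hζX).1
  have hζY : ζ ∈ Y := hYunset ζ hζX hζrn
  have hζτ : ζ ⊆ τ := by
    rw [hτeq]
    exact fun z hz => mem_coneHull_of_mem (Or.inl hz)
  have hSτ : ∀ s ∈ coneHull (↑S : Set (V n)), s ∈ τ := by
    intro s hs
    rw [hτeq]
    exact coneHull_mono Set.subset_union_right hs
  -- the ray split
  have hraysplit : ∀ ν', ν' ∈ Y → coneDim ν' = 1 → ν' ⊆ τ →
      ν' ⊆ ζ ∨ ∃ w' ∈ S, ν' = coneHull {w'} := by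
    intro ν' hν'Y hν'dim hν'τ
    have hν'face : IsFaceOf ν' τ := ray_face_of_subset hYfan hν'Y hτY hν'τ
    obtain ⟨gr, hgr, hgreq⟩ := hν'face
    rw [hτeq] at hgr hgreq
    have hdesc : ν' = coneHull ({y ∈ ζ | gr y = 0} ∪ ↑(S.filter (fun w => gr w = 0))) := by
      rw [hgreq]
      exact decomp_face_eq hT hgr
    rcases Finset.eq_empty_or_nonempty (S.filter (fun w => gr w = 0)) with hem | ⟨w', hw'⟩
    · left
      rw [hdesc, hem]
      simp only [Finset.coe_empty, Set.union_empty]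
      rw [coneHull_cut_eq hζhull]
      exact fun y hy => hy.1
    · right
      have hw'S : w' ∈ S := Finset.mem_of_mem_filter w' hw'
      have hw'0 : w' ≠ 0 := (hSgen w' hw'S).2
      have hw'ν' : w' ∈ ν' := by
        rw [hdesc]
        exact mem_coneHull_of_mem (Or.inr (Finset.mem_coe.mpr hw'))
      have hsub : coneHull {w'} ⊆ ν' := by
        apply coneHull_subset_of_closed ((hYfan.2.1 ν' hν'Y).1.coneSet).1
          ((hYfan.2.1 ν' hν'Y).1.coneSet).2.1 ((hYfan.2.1 ν' hν'Y).1.coneSet).2.2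
        simpa using hw'ν'
      exact ⟨w', hw'S, ray_eq_of_subset (hYfan.2.1 ν' hν'Y).1 (hYfan.2.1 ν' hν'Y).2
        hν'dim hw'0 rfl hsub⟩
  have hνζ : ν ⊆ ζ := by
    rcases hraysplit ν hνY hνdim hντ with h | ⟨w', hw'S, hνw'⟩
    · exact h
    · exact absurd (hνw' ▸ (hSgen w' hw'S).1) hνE
  -- the projection
  have hspan' : Submodule.span ℚ ζ ⊓ Submodule.span ℚ (↑S : Set (V n)) = ⊥ := by
    rw [eq_bot_iff]
    intro x hx
    rw [Submodule.mem_bot]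
    exact hspan x hx.1 hx.2
  obtain ⟨π₀, hπid, hπker⟩ := exists_projection hspan'
  have hπζ : ∀ y ∈ ζ, π₀ y = y := fun y hy => hπid y (Submodule.subset_span hy)
  have hπS : ∀ s ∈ coneHull (↑S : Set (V n)), π₀ s = 0 := by
    intro s hs
    apply hπker
    revert s hs
    apply coneHull_subset_of_closed (Submodule.zero_mem _)
      (fun a ha b hb => Submodule.add_mem _ ha hb)
      (fun c _ a ha => Submodule.smul_mem _ c ha) Submodule.subset_span
  have hπτ : ∀ x ∈ τ, π₀ x ∈ ζ ∧ ∃ s ∈ coneHull (↑S : Set (V n)), x = π₀ x + s := by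
    intro x hx
    rw [hτeq] at hx
    obtain ⟨y, hy, s, hs, rfl⟩ := mem_coneHull_union_iff.mp hx
    rw [hζhull] at hy
    have hπx : π₀ (y + s) = y := by
      rw [map_add, hπζ y hy, hπS s hs, add_zero]
    rw [hπx]
    exact ⟨hy, s, hs, rfl⟩
  have hπν : ∀ z ∈ ν, π₀ z = z := fun z hz => hπζ z (hνζ hz)
  -- the convex-subdivision data
  obtain ⟨⟨hZfan, hZsupp, hZcont⟩, ψ₀, hgood₀, hsign₀⟩ := hRC ζ hζX hζrn
  obtain ⟨hconv₀, hlin₀, hmax₀⟩ := hgood₀ ζ (IsFaceOf.refl ζ)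
  have hZsupp' : support {σ | σ ∈ starSubdiv Y ν ∧ σ ⊆ ζ} = ζ := by
    rw [hZsupp, support_faces]
  obtain ⟨σ₀, hσ₀Z, hσ₀ζ, -⟩ :=
    hmax₀ 0 ∅ (Set.empty_subset ζ) (convex_empty) (fun x hx => absurd hx (Set.notMem_empty x))
  have hψ₀0 : ψ₀ 0 = 0 := by
    obtain ⟨m, hm⟩ := hlin₀ σ₀ hσ₀Z hσ₀ζ
    rw [hm 0 (hZfan.2.1 σ₀ hσ₀Z).1.zero_mem, map_zero]
  have hψ₀hom : ∀ u ∈ ζ, ∀ c : ℚ, 0 ≤ c → ψ₀ (c • u) = c * ψ₀ u := by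
    intro u hu c hc
    have husup : u ∈ support {σ | σ ∈ starSubdiv Y ν ∧ σ ⊆ ζ} := by rw [hZsupp']; exact hu
    obtain ⟨σ'', hσ''Z, huσ''⟩ := husup
    obtain ⟨m, hm⟩ := hlin₀ σ'' hσ''Z hσ''Z.2
    have hcu : c • u ∈ σ'' := (hZfan.2.1 σ'' hσ''Z).1.smul_mem hc huσ''
    rw [hm _ hcu, hm _ huσ'', map_smul, smul_eq_mul]
  -- face of τ cut by pulled-back functional
  have hpullface : ∀ g : (V n) →ₗ[ℚ] ℚ, (∀ u ∈ ζ, 0 ≤ g u) →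
      IsFaceOf {x ∈ τ | (g.comp π₀) x = 0} τ :=
    fun g hg => ⟨g.comp π₀, fun x hx => hg _ (hπτ x hx).1, rfl⟩
  refine ⟨fun x => ψ₀ (π₀ x), ?_, ?_, ?_, ?_⟩
  · -- goodness
    rintro τ₀ hτ₀
    rw [Set.mem_singleton_iff] at hτ₀
    subst τ₀
    refine ⟨?_, ?_, ?_⟩
    · -- convexity
      refine ⟨hτpoly.convex, ?_⟩
      intro x hx y hy a b ha hb hab
      show ψ₀ (π₀ (a • x + b • y)) ≤ a • ψ₀ (π₀ x) + b • ψ₀ (π₀ y)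
      rw [map_add, map_smul, map_smul]
      exact hconv₀.2 (hπτ x hx).1 (hπτ y hy).1 ha hb hab
    · -- linearity on pieces
      intro σ' hσ' hσ'τ
      rcases starSubdiv_cases hYfan hv0 hνgen hσ' with ⟨hσ'Y, hnνσ'⟩ |
        ⟨σ₁, hσ₁, hνσ₁, ξ, hξface, hnνξ, hσ'eq, hvξ, hvspan, hξhull, hσ'poly, hσ'sub,
          hξY, hνσ', hξσ'⟩
      · -- old cone: a face of τ
        have hface : IsFaceOf σ' τ := by
          have := (hYfan.2.2.2 σ' hσ'Y τ hτY).2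
          rwa [Set.inter_eq_self_of_subset_left hσ'τ] at this
        obtain ⟨g, hg, hgeq⟩ := hface
        rw [hτeq] at hg hgeq
        have hdesc : σ' = coneHull ({y ∈ ζ | g y = 0} ∪ ↑(S.filter fun w => g w = 0)) := by
          rw [hgeq]
          exact decomp_face_eq hT hg
        have hζgface : IsFaceOf {y ∈ ζ | g y = 0} ζ :=
          ⟨g, fun y hy => hg y (coneHull_mono Set.subset_union_left (mem_coneHull_of_mem hy)), rfl⟩
        have hζgY : {y ∈ ζ | g y = 0} ∈ Y := hYfan.2.2.1 ζ hζY _ hζgface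
        have hζghull : coneHull {y ∈ ζ | g y = 0} = {y ∈ ζ | g y = 0} := coneHull_cut_eq hζhull g
        have hνζg : ¬ ν ⊆ {y ∈ ζ | g y = 0} := by
          intro hsub
          apply hnνσ'
          rw [hdesc]
          exact hsub.trans (fun z hz => mem_coneHull_of_mem (Or.inl hz))
        obtain ⟨m₀, hm₀⟩ := hlin₀ {y ∈ ζ | g y = 0} ⟨Or.inl ⟨hζgY, hνζg⟩, fun y hy => hy.1⟩
          (fun y hy => hy.1)
        refine ⟨m₀.comp π₀, ?_⟩
        intro x hxσ'
        rw [hdesc] at hxσ'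
        obtain ⟨y, hy, s, hs, rfl⟩ := mem_coneHull_union_iff.mp hxσ'
        rw [hζghull] at hy
        have hsS : s ∈ coneHull (↑S : Set (V n)) :=
          coneHull_mono (Finset.coe_subset.mpr (Finset.filter_subset _ _)) hs
        have hπx : π₀ (y + s) = y := by
          rw [map_add, hπζ y hy.1, hπS s hsS, add_zero]
        show ψ₀ (π₀ (y + s)) = m₀ (π₀ (y + s))
        rw [hπx]
        exact hm₀ y hy
      · -- join piece
        subst hσ'eq
        have hξτ2 : ξ ⊆ τ := hξσ'.trans hσ'τ
        have hξfaceτ : IsFaceOf ξ τ := by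
          have := (hYfan.2.2.2 ξ hξY τ hτY).2
          rwa [Set.inter_eq_self_of_subset_left hξτ2] at this
        obtain ⟨g, hg, hgeq⟩ := hξfaceτ
        rw [hτeq] at hg hgeq
        have hdesc : ξ = coneHull ({y ∈ ζ | g y = 0} ∪ ↑(S.filter fun w => g w = 0)) := by
          rw [hgeq]
          exact decomp_face_eq hT hg
        have hζgface : IsFaceOf {y ∈ ζ | g y = 0} ζ :=
          ⟨g, fun y hy => hg y (coneHull_mono Set.subset_union_left (mem_coneHull_of_mem hy)), rfl⟩
        have hζghull : coneHull {y ∈ ζ | g y = 0} = {y ∈ ζ | g y = 0} := coneHull_cut_eq hζhull g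
        have hνζg : ¬ ν ⊆ {y ∈ ζ | g y = 0} := by
          intro hsub
          apply hnνξ
          rw [hdesc]
          exact hsub.trans (fun z hz => mem_coneHull_of_mem (Or.inl hz))
        have hσ''X : coneHull ({y ∈ ζ | g y = 0} ∪ ν) ∈ starSubdiv Y ν :=
          Or.inr ⟨ζ, hζY, hνζ, {y ∈ ζ | g y = 0}, hζgface, hνζg, rfl⟩
        have hσ''ζ : coneHull ({y ∈ ζ | g y = 0} ∪ ν) ⊆ ζ :=
          join_subset hζpoly (fun y hy => hy.1) hνζ
        obtain ⟨m₀, hm₀⟩ := hlin₀ _ ⟨hσ''X, hσ''ζ⟩ hσ''ζ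
        refine ⟨m₀.comp π₀, ?_⟩
        intro x hxσ'
        rw [hνgen] at hxσ'
        obtain ⟨u, hu, t₀, ht₀, rfl⟩ := (mem_join_ray hξhull).mp hxσ'
        rw [hdesc] at hu
        obtain ⟨y, hy, s, hs, rfl⟩ := mem_coneHull_union_iff.mp hu
        rw [hζghull] at hy
        have hsS : s ∈ coneHull (↑S : Set (V n)) :=
          coneHull_mono (Finset.coe_subset.mpr (Finset.filter_subset _ _)) hs
        have hπx : π₀ (y + s + t₀ • v) = y + t₀ • v := by
          rw [map_add, map_add, hπζ y hy.1, hπS s hsS, map_smul, hπν v hvν, add_zero]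
        have hπmem : y + t₀ • v ∈ coneHull ({y ∈ ζ | g y = 0} ∪ ν) := by
          rw [hνgen]
          exact (mem_join_ray hζghull).mpr ⟨y, hy, t₀, ht₀, rfl⟩
        show ψ₀ (π₀ (y + s + t₀ • v)) = m₀ (π₀ (y + s + t₀ • v))
        rw [hπx]
        exact hm₀ _ hπmem
    · -- maximality
      intro m t htτ htcv hagree
      set t' := π₀ '' t with ht'def
      have ht'ζ : t' ⊆ ζ := by
        rintro _ ⟨x, hx, rfl⟩
        exact (hπτ x (htτ hx)).1
      have haff : ∀ u₁ ∈ t', ∀ u₂ ∈ t', ∀ a b : ℚ, 0 ≤ a → 0 ≤ b → a + b = 1 →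
          ψ₀ (a • u₁ + b • u₂) = a * ψ₀ u₁ + b * ψ₀ u₂ := by
        rintro _ ⟨x₁, hx₁, rfl⟩ _ ⟨x₂, hx₂, rfl⟩ a b ha hb hab
        have hx12 : a • x₁ + b • x₂ ∈ t := htcv hx₁ hx₂ ha hb hab
        have h1 : ψ₀ (π₀ x₁) = m x₁ := hagree x₁ hx₁
        have h2 : ψ₀ (π₀ x₂) = m x₂ := hagree x₂ hx₂
        have h12 : ψ₀ (π₀ (a • x₁ + b • x₂)) = m (a • x₁ + b • x₂) := hagree _ hx12
        rw [map_add, map_smul, map_smul] at h12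
        rw [h12, map_add, map_smul, map_smul, h1, h2, smul_eq_mul, smul_eq_mul]
      have ht'cv : Convex ℚ t' := by
        rintro _ ⟨x₁, hx₁, rfl⟩ _ ⟨x₂, hx₂, rfl⟩ a b ha hb hab
        exact ⟨a • x₁ + b • x₂, htcv hx₁ hx₂ ha hb hab, by rw [map_add, map_smul, map_smul]⟩
      -- Jensen equality for convex combinations over t'
      have hjensen : ∀ (tf : Finset (V n)), (↑tf : Set (V n)) ⊆ t' → ∀ c : V n → ℚ,
          (∀ w ∈ tf, 0 ≤ c w) → (∑ w ∈ tf, c w) = 1 →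
          ψ₀ (∑ w ∈ tf, c w • w) = ∑ w ∈ tf, c w * ψ₀ w := by
        intro tf
        induction tf using Finset.induction with
        | empty => intro _ c _ hsum; simp at hsum
        | @insert u tf hu ih =>
          intro hsub c hc hsum
          rw [Finset.sum_insert hu] at hsum ⊢
          rw [Finset.sum_insert hu]
          set s := ∑ w ∈ tf, c w with hsdef
          have hs0 : 0 ≤ s := Finset.sum_nonneg (fun w hw => hc w (Finset.mem_insert_of_mem hw))
          have hcu : 0 ≤ c u := hc u (Finset.mem_insert_self u tf)
          have hsub' : (↑tf : Set (V n)) ⊆ t' := fun w hw =>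
            hsub (by exact_mod_cast Finset.mem_insert_of_mem (by exact_mod_cast hw))
          rcases eq_or_lt_of_le hs0 with hs | hs
          · -- all tail coefficients vanish
            have hall : ∀ w ∈ tf, c w = 0 :=
              (Finset.sum_eq_zero_iff_of_nonneg
                (fun w hw => hc w (Finset.mem_insert_of_mem hw))).mp hs.symm
            have h1 : ∑ w ∈ tf, c w • w = 0 :=
              Finset.sum_eq_zero (fun w hw => by rw [hall w hw, zero_smul])
            have h2 : (∑ w ∈ tf, c w * ψ₀ w) = 0 :=
              Finset.sum_eq_zero (fun w hw => by rw [hall w hw, zero_mul])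
            have hcu1 : c u = 1 := by rw [← hs, add_zero] at hsum; linarith [hsum]
            rw [h1, h2, add_zero, add_zero, hcu1, one_smul, one_mul]
          · set y := ∑ w ∈ tf, (c w / s) • w with hydef
            have hyt' : y ∈ t' := by
              apply ht'cv.sum_mem (fun w hw => div_nonneg (hc w (Finset.mem_insert_of_mem hw)) hs0)
              · rw [← Finset.sum_div, ← hsdef, div_self (ne_of_gt hs)]
              · intro w hw
                exact hsub' (Finset.mem_coe.mpr hw)
            have hyeq : ∑ w ∈ tf, c w • w = s • y := by
              rw [hydef, Finset.smul_sum]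
              apply Finset.sum_congr rfl
              intro w hw
              rw [smul_smul, mul_div_cancel₀ _ (ne_of_gt hs)]
            have hψy : ψ₀ y = ∑ w ∈ tf, (c w / s) * ψ₀ w := by
              apply ih hsub' _ (fun w hw => div_nonneg (hc w (Finset.mem_insert_of_mem hw)) hs0)
              rw [← Finset.sum_div, ← hsdef, div_self (ne_of_gt hs)]
            have hut' : u ∈ t' := hsub (by exact_mod_cast Finset.mem_insert_self u tf)
            have := haff u hut' y hyt' (c u) s hcu hs0 hsum
            rw [hyeq, this, hψy, Finset.mul_sum]
            congr 1
            apply Finset.sum_congr rfl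
            intro w hw
            rw [← mul_assoc, mul_div_cancel₀ _ (ne_of_gt hs)]
      -- conic version
      have hconic : ∀ (tf : Finset (V n)), (↑tf : Set (V n)) ⊆ t' → ∀ c : V n → ℚ,
          (∀ w ∈ tf, 0 ≤ c w) →
          ψ₀ (∑ w ∈ tf, c w • w) = ∑ w ∈ tf, c w * ψ₀ w := by
        intro tf hsub c hc
        set s := ∑ w ∈ tf, c w with hsdef
        have hs0 : 0 ≤ s := Finset.sum_nonneg hc
        rcases eq_or_lt_of_le hs0 with hs | hs
        · have hall : ∀ w ∈ tf, c w = 0 := (Finset.sum_eq_zero_iff_of_nonneg hc).mp hs.symm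
          rw [Finset.sum_eq_zero (fun w hw => by rw [hall w hw, zero_smul]),
            Finset.sum_eq_zero (fun w hw => by rw [hall w hw, zero_mul]), hψ₀0]
        · set y := ∑ w ∈ tf, (c w / s) • w with hydef
          have hyt' : y ∈ t' := by
            apply ht'cv.sum_mem (fun w hw => div_nonneg (hc w hw) hs0)
            · rw [← Finset.sum_div, ← hsdef, div_self (ne_of_gt hs)]
            · intro w hw
              exact hsub (Finset.mem_coe.mpr hw)
          have hyζ : y ∈ ζ := ht'ζ hyt'
          have hyeq : ∑ w ∈ tf, c w • w = s • y := by
            rw [hydef, Finset.smul_sum]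
            apply Finset.sum_congr rfl
            intro w hw
            rw [smul_smul, mul_div_cancel₀ _ (ne_of_gt hs)]
          have hψy : ψ₀ y = ∑ w ∈ tf, (c w / s) * ψ₀ w := by
            apply hjensen tf hsub _ (fun w hw => div_nonneg (hc w hw) hs0)
            rw [← Finset.sum_div, ← hsdef, div_self (ne_of_gt hs)]
          rw [hyeq, hψ₀hom y hyζ s hs0, hψy, Finset.mul_sum]
          apply Finset.sum_congr rfl
          intro w hw
          rw [← mul_assoc, mul_div_cancel₀ _ (ne_of_gt hs)]
      -- additivity on the cone hull of t'
      have hfadd : ∀ p ∈ coneHull t', ∀ q ∈ coneHull t', ψ₀ (p + q) = ψ₀ p + ψ₀ q := by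
        rintro p ⟨t₁, ht₁, c₁, hc₁, rfl⟩ q ⟨t₂, ht₂, c₂, hc₂, rfl⟩
        set c : V n → ℚ := fun w => (if w ∈ t₁ then c₁ w else 0) + (if w ∈ t₂ then c₂ w else 0)
          with hcdef
        have hcnn : ∀ w ∈ t₁ ∪ t₂, 0 ≤ c w := by
          intro w _
          have h1 : (0:ℚ) ≤ (if w ∈ t₁ then c₁ w else 0) := by
            by_cases hw : w ∈ t₁
            · rw [if_pos hw]; exact hc₁ w hw
            · rw [if_neg hw]
          have h2 : (0:ℚ) ≤ (if w ∈ t₂ then c₂ w else 0) := by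
            by_cases hw : w ∈ t₂
            · rw [if_pos hw]; exact hc₂ w hw
            · rw [if_neg hw]
          exact add_nonneg h1 h2
        have hsum : (∑ w ∈ t₁, c₁ w • w) + (∑ w ∈ t₂, c₂ w • w) = ∑ w ∈ t₁ ∪ t₂, c w • w := by
          rw [hcdef]
          simp only [add_smul, Finset.sum_add_distrib]
          rw [sum_ite_coe c₁ Finset.subset_union_left, sum_ite_coe c₂ Finset.subset_union_right]
        have hunion : (↑(t₁ ∪ t₂) : Set (V n)) ⊆ t' := by
          rw [Finset.coe_union]
          exact Set.union_subset ht₁ ht₂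
        rw [hsum, hconic _ hunion c hcnn]
        have e1 : ψ₀ (∑ w ∈ t₁, c₁ w • w) = ∑ w ∈ t₁, c₁ w * ψ₀ w := hconic t₁ ht₁ c₁ hc₁
        have e2 : ψ₀ (∑ w ∈ t₂, c₂ w • w) = ∑ w ∈ t₂, c₂ w * ψ₀ w := hconic t₂ ht₂ c₂ hc₂
        rw [e1, e2, hcdef]
        simp only [add_mul, Finset.sum_add_distrib]
        rw [sum_ite_scalar c₁ ψ₀ Finset.subset_union_left,
          sum_ite_scalar c₂ ψ₀ Finset.subset_union_right]
      obtain ⟨m', hm'⟩ := exists_linear_of_additive (zero_mem_coneHull t')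
        (fun a ha b hb => add_mem_coneHull ha hb)
        (fun c hc a ha => smul_mem_coneHull hc ha) hψ₀0 hfadd
      have hKζ : coneHull t' ⊆ ζ :=
        coneHull_subset_of_closed hζpoly.zero_mem (fun a ha b hb => hζpoly.add_mem ha hb)
          (fun c hc a ha => hζpoly.smul_mem hc ha) ht'ζ
      obtain ⟨σ'', hσ''Z, hσ''ζ, hKσ''⟩ := hmax₀ m' (coneHull t') hKζ (convex_coneHull t')
        (fun x hx => (hm' x hx).symm)
      have ht'K : t' ⊆ coneHull t' := fun u hu => mem_coneHull_of_mem hu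
      rcases starSubdiv_cases hYfan hv0 hνgen hσ''Z.1 with ⟨hσ''Y, hnνσ''⟩ |
        ⟨σ₃, hσ₃, hνσ₃, ξ₂, hξ₂face, hnνξ₂, hσ''eq, hvξ₂, hvspan₂, hξ₂hull, hσ''poly,
          hσ''sub3, hξ₂Y, hνσ''2, hξ₂σ''⟩
      · -- the piece is an old face of ζ
        have hface : IsFaceOf σ'' ζ := by
          have := (hYfan.2.2.2 σ'' hσ''Y ζ hζY).2
          rwa [Set.inter_eq_self_of_subset_left hσ''Z.2] at this
        obtain ⟨g₂, hg₂, hg₂eq⟩ := hface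
        have hLface : IsFaceOf {x ∈ τ | (g₂.comp π₀) x = 0} τ := hpullface g₂ hg₂
        have hLY : {x ∈ τ | (g₂.comp π₀) x = 0} ∈ Y := hYfan.2.2.1 τ hτY _ hLface
        have hνL : ¬ ν ⊆ {x ∈ τ | (g₂.comp π₀) x = 0} := by
          intro hsub
          apply hnνσ''
          intro z hz
          have h1 := hsub hz
          have h2 : g₂ z = 0 := by
            have := h1.2
            simpa [hπν z hz] using this
          rw [hg₂eq]
          exact ⟨hνζ hz, h2⟩
        refine ⟨{x ∈ τ | (g₂.comp π₀) x = 0}, Or.inl ⟨hLY, hνL⟩, hLface.subset, ?_⟩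
        intro x hx
        refine ⟨htτ hx, ?_⟩
        have hmem : π₀ x ∈ σ'' := hKσ'' (ht'K ⟨x, hx, rfl⟩)
        rw [hg₂eq] at hmem
        simpa using hmem.2
      · -- the piece is a join
        subst hσ''eq
        have hξ₂ζ : ξ₂ ⊆ ζ := hξ₂σ''.trans hσ''Z.2
        have hξ₂faceζ : IsFaceOf ξ₂ ζ := by
          have := (hYfan.2.2.2 ξ₂ hξ₂Y ζ hζY).2
          rwa [Set.inter_eq_self_of_subset_left hξ₂ζ] at this
        obtain ⟨g₂, hg₂, hg₂eq⟩ := hξ₂faceζ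
        have hηface : IsFaceOf {x ∈ τ | (g₂.comp π₀) x = 0} τ := hpullface g₂ hg₂
        have hνη : ¬ ν ⊆ {x ∈ τ | (g₂.comp π₀) x = 0} := by
          intro hsub
          apply hnνξ₂
          intro z hz
          have h1 := hsub hz
          have h2 : g₂ z = 0 := by
            have := h1.2
            simpa [hπν z hz] using this
          rw [hg₂eq]
          exact ⟨hνζ hz, h2⟩
        have hLX : coneHull ({x ∈ τ | (g₂.comp π₀) x = 0} ∪ ν) ∈ starSubdiv Y ν :=
          Or.inr ⟨τ, hτY, hντ, _, hηface, hνη, rfl⟩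
        have hηhull : coneHull {x ∈ τ | (g₂.comp π₀) x = 0} = {x ∈ τ | (g₂.comp π₀) x = 0} :=
          (hτpoly.face hηface).coneHull_eq
        refine ⟨_, hLX, join_subset hτpoly hηface.subset hντ, ?_⟩
        intro x hx
        obtain ⟨hπxζ, s, hs, hxd⟩ := hπτ x (htτ hx)
        have hmem : π₀ x ∈ coneHull (ξ₂ ∪ ν) := hKσ'' (ht'K ⟨x, hx, rfl⟩)
        rw [hνgen] at hmem
        obtain ⟨u, hu, t₀, ht₀, hπeq⟩ := (mem_join_ray hξ₂hull).mp hmem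
        have husτ : u + s ∈ τ := by
          rw [hτeq]
          apply mem_coneHull_union_iff.mpr
          exact ⟨u, by rw [hζhull]; exact hξ₂ζ hu, s, hs, rfl⟩
        have husη : u + s ∈ {x ∈ τ | (g₂.comp π₀) x = 0} := by
          refine ⟨husτ, ?_⟩
          have hπus : π₀ (u + s) = u := by
            rw [map_add, hπζ u (hξ₂ζ hu), hπS s hs, add_zero]
          have hg₂u : g₂ u = 0 := by rw [hg₂eq] at hu; exact hu.2
          simp [hπus, hg₂u]
        rw [hνgen]
        apply (mem_join_ray hηhull).mpr
        refine ⟨u + s, husη, t₀, ht₀, ?_⟩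
        rw [hxd, hπeq]
        abel
  · -- sign: B
    intro ν' hν'B hν'τ x hx
    have hν'X : ν' ∈ raysIn X := hQ.1 hν'B
    have hν'Y : ν' ∈ Y := hYrays ν' hν'X
    rcases hraysplit ν' hν'Y hν'X.2 hν'τ with hsub | ⟨w', hw'S, hν'eq⟩
    · show 0 ≤ ψ₀ (π₀ x)
      rw [hπζ x (hsub hx)]
      exact hsign₀.1 ν' hν'B x hx
    · show 0 ≤ ψ₀ (π₀ x)
      rw [hν'eq] at hx
      obtain ⟨t₀, ht₀, rfl⟩ := mem_coneHull_singleton_iff.mp hx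
      rw [map_smul, hπker w' (Submodule.subset_span (Finset.mem_coe.mpr hw'S)), smul_zero, hψ₀0]
  · -- sign: C
    intro ν' hν'C hν'τ x hx
    have hν'X : ν' ∈ raysIn X := hQ.2.1 hν'C
    have hν'Y : ν' ∈ Y := hYrays ν' hν'X
    rcases hraysplit ν' hν'Y hν'X.2 hν'τ with hsub | ⟨w', hw'S, hν'eq⟩
    · show ψ₀ (π₀ x) ≤ 0
      rw [hπζ x (hsub hx)]
      exact hsign₀.2.1 ν' hν'C x hx
    · show ψ₀ (π₀ x) ≤ 0
      rw [hν'eq] at hx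
      obtain ⟨t₀, ht₀, rfl⟩ := mem_coneHull_singleton_iff.mp hx
      rw [map_smul, hπker w' (Submodule.subset_span (Finset.mem_coe.mpr hw'S)), smul_zero, hψ₀0]
  · -- sign: neutral
    intro ν' hν'rays hν'τ hν'B hν'C hν'H x hx
    obtain ⟨hν'X', hν'dim⟩ := hν'rays
    have hν'Y : ν' ∈ Y := by
      rcases starSubdiv_cases hYfan hv0 hνgen hν'X' with ⟨h, _⟩ |
        ⟨σ₃, hσ₃, hνσ₃, ξ₃, hξ₃face, hnνξ₃, hν'eq, hvξ₃, hvspan₃, hξ₃hull, hν'poly,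
          hν'sub, hξ₃Y, hνν', hξ₃ν'⟩
      · exact h
      · exfalso
        have hν'str : StronglyConvex ν' := ((hYfan.2.1 σ₃ hσ₃).2).mono hν'sub
        have heq : ν' = ν := ray_eq_of_subset hν'poly hν'str hν'dim hv0 hνgen hνν'
        rcases hνBCH with h | h
        · rcases h with h | h
          · exact hν'B (heq ▸ h)
          · exact hν'C (heq ▸ h)
        · exact hν'H (heq ▸ h)
    rcases hraysplit ν' hν'Y hν'dim hν'τ with hsub | ⟨w', hw'S, hν'eq⟩
    · show ψ₀ (π₀ x) = 0
      rw [hπζ x (hsub hx)]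
      exact hsign₀.2.2 ν' ⟨⟨hν'X', hsub⟩, hν'dim⟩ hν'B hν'C hν'H x hx
    · exfalso
      have hν'E : ν' ∈ E := hν'eq ▸ (hSgen w' hw'S).1
      rcases hE ν' hν'E with h | h
      · rcases h with h | h
        · exact hν'B h
        · exact hν'C h
      · exact hν'H h

end AuxBackward
/-- In a sequence of star subdivisions (processed in the reversed order `𝒪⁻`),
the step at the ray `ν` (with the rays of `L₂` coming after `ν` in `𝒪`, hence already
processed) is locally-convex iff for every `L₂`-unsettled cone `ζ` of `X`, the cones of the
next fan contained in `ζ` form a convex subdivision of the affine fan of `ζ`. -/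
theorem seqStar_step_locallyConvex_iff {n : ℕ} (X B C H : Set (Set (V n)))
    (hFan : IsFan X) (hQ : IsQuadData X B C H)
    (L₁ L₂ : List (Set (V n))) (ν : Set (V n))
    (hnd : (L₁ ++ ν :: L₂).Nodup)
    (hmem : ∀ μ ∈ L₁ ++ ν :: L₂, μ ∈ B ∪ C ∪ H) :
    IsLocallyConvexSubdiv (starSubdiv (L₂.reverse.foldl starSubdiv X) ν)
        (L₂.reverse.foldl starSubdiv X) B C H ↔
      ∀ ζ ∈ X, Unsettled {μ | μ ∈ L₂} ζ →
        IsConvexSubdiv {σ | σ ∈ starSubdiv (L₂.reverse.foldl starSubdiv X) ν ∧ σ ⊆ ζ}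
          (faces ζ) B C H := by
  classical
  have hBCHsub : B ∪ C ∪ H ⊆ raysIn X := by
    intro μ hμ
    rcases hμ with h | h
    · rcases h with h | h
      · exact hQ.1 h
      · exact hQ.2.1 h
    · exact hQ.2.2.1 h
  have hνBCH : ν ∈ B ∪ C ∪ H := hmem ν (by simp)
  have hνX : ν ∈ raysIn X := hBCHsub hνBCH
  have hL₂mem : ∀ μ ∈ L₂, μ ∈ raysIn X := fun μ hμ => hBCHsub (hmem μ (by simp [hμ]))
  have hE : ∀ μ' ∈ {μ | μ ∈ L₂}, μ' ∈ B ∪ C ∪ H := fun μ' hμ' => hmem μ'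
    (by simp only [List.mem_append, List.mem_cons]; exact Or.inr (Or.inr hμ'))
  have hνE : ν ∉ {μ | μ ∈ L₂} := by
    have hnd2 : (ν :: L₂).Nodup := hnd.of_append_right
    exact (List.nodup_cons.mp hnd2).1
  have hInv : Inv X {μ | μ ∈ L₂} (L₂.reverse.foldl starSubdiv X) := by
    have h1 := inv_fold hFan L₂.reverse ∅ X (inv_base hFan)
      (fun μ hμ => hL₂mem μ (List.mem_reverse.mp hμ))
    have h2 : (∅ : Set (Set (V n))) ∪ {μ | μ ∈ L₂.reverse} = {μ | μ ∈ L₂} := by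
      ext μ
      simp [List.mem_reverse]
    rwa [h2] at h1
  have hνY : ν ∈ (L₂.reverse.foldl starSubdiv X) := hInv.2.2.2.1 ν hνX
  obtain ⟨hX'fan, hX'supp, hX'cont⟩ := starSubdiv_props hInv.1 hνY hνX.2
  have hsubXY : IsSubdivision (starSubdiv (L₂.reverse.foldl starSubdiv X) ν)
      (L₂.reverse.foldl starSubdiv X) := ⟨hX'fan, hX'supp, hX'cont⟩
  constructor
  · rintro ⟨hsub, hψ⟩ ζ hζX hunsettled
    have hζY : ζ ∈ (L₂.reverse.foldl starSubdiv X) := hInv.2.2.2.2.1 ζ hζX hunsettled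
    obtain ⟨ψ, hgood, hsigned⟩ := hψ ζ hζY
    exact forward_dir hFan hX'fan hQ hζX ψ hgood hsigned
  · intro hRC
    refine ⟨hsubXY, ?_⟩
    intro τ hτY
    by_cases hντ : ν ⊆ τ
    · exact backward_tau hFan hQ hInv hE hνX hνE hνBCH (fun ζ hζ hrn => hRC ζ hζ hrn) hτY hντ
    · have hτX' : τ ∈ starSubdiv (L₂.reverse.foldl starSubdiv X) ν := Or.inl ⟨hτY, hντ⟩
      have hτpoly := (hInv.1.2.1 τ hτY).1
      refine ⟨fun _ => 0, ?_, ?_, ?_, ?_⟩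
      · rintro τ₀ hτ₀
        rw [Set.mem_singleton_iff] at hτ₀
        subst τ₀
        refine ⟨convexOn_const 0 hτpoly.convex, fun σ' _ _ => ⟨0, by simp⟩, ?_⟩
        intro m t htτ _ _
        exact ⟨τ, hτX', subset_rfl, htτ⟩
      · intro ν' _ _ x _
        exact le_rfl
      · intro ν' _ _ x _
        exact le_rfl
      · intro ν' _ _ _ _ _ x _
        exact rfl

end ToricPaper
end

section
/- Let σ ⊂ ℚ^n be a full-dimensional strongly convex rational polyhedral cone with at least two facets, I_D its set of facets, and I_B, I_C ⊆ I_D disjoint. Fix p ≥ 0. For m ∈ ℤ^n define Ω(m) ⊆ Λᵖ(ℚ^n) by: Ω(m) = 0 if m ∉ σ or m lies in some facet of I_B; otherwise Ω(m) = Λᵖ( ⋂ { Span(θ) : θ ∈ I_D ∖ I_C, m ∈ θ } ), where the intersection over the empty family is ℚ^n. For each facet θ, let σ_θ = σ + Span(θ) (the closed half-space containing σ with boundary Span(θ)) and define Ω_θ(m) ⊆ Λᵖ(ℚ^n) by: Ω_θ(m) = 0 if m ∉ σ_θ; Ω_θ(m) = Λᵖ(ℚ^n) if m ∈ σ_θ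 ∖ Span(θ); and for m ∈ Span(θ) ∩ ℤ^n: Ω_θ(m) = 0 if θ ∈ I_B, Ω_θ(m) = Λᵖ(ℚ^n) if θ ∈ I_C, and Ω_θ(m) = Λᵖ(Span(θ)) otherwise. Then for every m ∈ ℤ^n one has Ω(m) = ⋂_{θ ∈ I_D} Ω_θ(m). (This graded identity is the content of the proposition that Danilov's module of logarithmic p-forms Ωᵖ_{(R,!B,*C)} of an affine toric triple equals the intersection of its restrictions to the half-space rings R_θ, identifying Ωᵖ_{(X,!B,*C)} with the reflexive hull of Ωᵖ_X(log(B+C))(−B).) -/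
namespace ToricPaper

open scoped BigOperators

variable {n : ℕ}

/-- The facets (codimension-one faces) of a cone. -/
def facetsOf (σ : Set (V n)) : Set (Set (V n)) :=
  {θ | IsFaceOf θ σ ∧ coneDim θ + 1 = coneDim σ}

/-- The `p`-th exterior power of a subspace `W ⊆ ℚ^n`, as a subspace of `Λᵖ(ℚ^n)` inside the
exterior algebra. -/
noncomputable def extPow (p : ℕ) (W : Submodule ℚ (V n)) :
    Submodule ℚ (ExteriorAlgebra ℚ (V n)) :=
  (Submodule.map (ExteriorAlgebra.ι ℚ) W) ^ p

/-- The closed half-space `σ_θ = σ + Span(θ)` determined by a facet `θ` of `σ`. -/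
def halfSpaceOf (σ θ : Set (V n)) : Set (V n) :=
  {x | ∃ s ∈ σ, ∃ w ∈ (Submodule.span ℚ θ : Set (V n)), x = s + w}

open Classical in
/-- The degree-`m` component `Ω(m)` of Danilov's module of logarithmic `p`-forms. -/
noncomputable def bigOmega (σ : Set (V n)) (IB IC : Set (Set (V n))) (p : ℕ) (x : V n) :
    Submodule ℚ (ExteriorAlgebra ℚ (V n)) :=
  if x ∉ σ ∨ ∃ θ ∈ IB, x ∈ θ then ⊥
  else extPow p (⨅ θ ∈ {θ | θ ∈ facetsOf σ \ IC ∧ x ∈ θ}, Submodule.span ℚ θ)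

open Classical in
/-- The degree-`m` component `Ω_θ(m)` of the module of logarithmic `p`-forms on the
half-space ring `R_θ`. -/
noncomputable def omegaTheta (σ θ : Set (V n)) (IB IC : Set (Set (V n))) (p : ℕ) (x : V n) :
    Submodule ℚ (ExteriorAlgebra ℚ (V n)) :=
  if x ∉ halfSpaceOf σ θ then ⊥
  else if x ∉ (Submodule.span ℚ θ : Set (V n)) then extPow p ⊤
  else if θ ∈ IB then ⊥
  else if θ ∈ IC then extPow p ⊤
  else extPow p (Submodule.span ℚ θ)

lemma mem_coneHull_fin {S : Finset (V n)} {x : V n} :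
    x ∈ coneHull (S : Set (V n)) ↔ ∃ c : V n → ℚ, (∀ v, 0 ≤ c v) ∧ x = ∑ v ∈ S, c v • v := by
  classical
  constructor
  · rintro ⟨t, hts, c, hc, rfl⟩
    refine ⟨fun v => if v ∈ t then c v else 0, ?_, ?_⟩
    · intro v; by_cases h : v ∈ t
      · simpa [h] using hc v h
      · simp [h]
    · rw [← Finset.sum_subset (Finset.coe_subset.mp hts)
        (fun v _ hv => by simp [hv])]
      exact Finset.sum_congr rfl (fun v hv => by simp [hv])
  · rintro ⟨c, hc, rfl⟩
    exact ⟨S, subset_rfl, c, fun v _ => hc v, rfl⟩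

/-- the solution set of a finite system of linear inequalities -/
def sol (D : Finset ((V n) →ₗ[ℚ] ℚ)) : Set (V n) := {x | ∀ f ∈ D, 0 ≤ f x}

lemma mem_coneHull_insert {S : Finset (V n)} {a : V n} (ha : a ∉ S) {x : V n} :
    x ∈ coneHull (↑(insert a S) : Set (V n)) ↔
      ∃ t : ℚ, 0 ≤ t ∧ x - t • a ∈ coneHull (S : Set (V n)) := by
  classical
  constructor
  · intro hx
    rw [mem_coneHull_fin] at hx
    obtain ⟨c, hc, rfl⟩ := hx
    rw [Finset.sum_insert ha]
    exact ⟨c a, hc a, mem_coneHull_fin.mpr ⟨c, hc, by abel⟩⟩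
  · rintro ⟨t, ht, hx⟩
    rw [mem_coneHull_fin] at hx ⊢
    obtain ⟨c, hc, hsum⟩ := hx
    refine ⟨Function.update c a t, ?_, ?_⟩
    · intro v; by_cases h : v = a
      · subst h; simpa using ht
      · simpa [Function.update_of_ne h] using hc v
    · rw [Finset.sum_insert ha, Function.update_self]
      have h2 : ∑ v ∈ S, (Function.update c a t) v • v = ∑ v ∈ S, c v • v :=
        Finset.sum_congr rfl (fun v hv => by
          have hva : v ≠ a := fun h => ha (h ▸ hv)
          rw [Function.update_of_ne hva])
      rw [h2, ← hsum]
      abel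

theorem weyl (S : Finset (V n)) :
    ∃ D : Finset ((V n) →ₗ[ℚ] ℚ), coneHull (S : Set (V n)) = sol D := by
  classical
  induction S using Finset.induction_on with
  | empty =>
      refine ⟨(Finset.univ.image fun i : Fin n => (LinearMap.proj i : (V n) →ₗ[ℚ] ℚ)) ∪
        (Finset.univ.image fun i : Fin n => -(LinearMap.proj i : (V n) →ₗ[ℚ] ℚ)), ?_⟩
      ext x
      simp only [sol, Set.mem_setOf_eq, Finset.mem_union, Finset.mem_image, Finset.mem_univ,
        true_and]
      constructor
      · rintro ⟨t, hts, c, hc, rfl⟩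
        have : t = ∅ := Finset.subset_empty.mp (by simpa using hts)
        subst this
        simp only [Finset.sum_empty]
        rintro f (⟨i, rfl⟩ | ⟨i, rfl⟩) <;> simp
      · intro hx
        have hx0 : x = 0 := by
          funext i
          have h1 : 0 ≤ x i := hx _ (Or.inl ⟨i, rfl⟩)
          have h2 : 0 ≤ -(x i) := by
            simpa using hx (-(LinearMap.proj i : (V n) →ₗ[ℚ] ℚ)) (Or.inr ⟨i, rfl⟩)
          have := le_antisymm (by linarith) h1
          simp [← this]
        exact ⟨∅, by simp, fun _ => 0, by simp, by simp [hx0]⟩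

  | @insert a S ha ih =>
      obtain ⟨D, hD⟩ := ih
      refine ⟨(D.filter (fun f => f a = 0)) ∪ (D.filter (fun f => 0 < f a)) ∪
        ((D.filter (fun f => f a < 0)) ×ˢ (D.filter (fun f => 0 < f a))).image
        (fun fg => (fg.2 a) • fg.1 + (-(fg.1 a)) • fg.2), ?_⟩
      ext x
      rw [mem_coneHull_insert ha, hD]
      simp only [sol, Set.mem_setOf_eq, Finset.mem_union, Finset.mem_image, Finset.mem_filter,
        Finset.mem_product]
      constructor
      · rintro ⟨t, ht, hx⟩
        rintro h (⟨⟨hf, hfa⟩ | ⟨hf, hfa⟩⟩ | ⟨⟨f, g⟩, ⟨⟨hf, hfa⟩, hg, hga⟩, rfl⟩)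
        · have := hx h hf
          simp only [map_sub, map_smul, smul_eq_mul] at this
          nlinarith
        · have := hx h hf
          simp only [map_sub, map_smul, smul_eq_mul] at this
          nlinarith
        · have h1 := hx f hf
          have h2 := hx g hg
          simp only [map_sub, map_smul, smul_eq_mul] at h1 h2
          simp only [LinearMap.add_apply, LinearMap.smul_apply, smul_eq_mul]
          nlinarith
      · intro hx
        have hz : ∀ f ∈ D, f a = 0 → 0 ≤ f x := fun f hf hfa =>
          hx f (Or.inl (Or.inl ⟨hf, hfa⟩))
        have hp : ∀ f ∈ D, 0 < f a → 0 ≤ f x := fun f hf hfa =>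
          hx f (Or.inl (Or.inr ⟨hf, hfa⟩))
        have hpair : ∀ f ∈ D, ∀ g ∈ D, f a < 0 → 0 < g a →
            0 ≤ g a * f x + (-(f a)) * g x := by
          intro f hf g hg hfa hga
          have := hx ((g a) • f + (-(f a)) • g)
            (Or.inr ⟨⟨f, g⟩, ⟨⟨hf, hfa⟩, hg, hga⟩, rfl⟩)
          simpa using this
        by_cases hP : (D.filter (fun f => 0 < f a)).Nonempty
        · obtain ⟨g₀, hg₀, hmin⟩ := Finset.exists_min_image _ (fun g => g x / g a) hP
          obtain ⟨hg₀D, hg₀a⟩ := Finset.mem_filter.mp hg₀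
          set t := g₀ x / g₀ a with htdef
          have hta : t * g₀ a = g₀ x := div_mul_cancel₀ _ (ne_of_gt hg₀a)
          refine ⟨t, ?_, ?_⟩
          · have h0 : 0 ≤ g₀ x := hp _ hg₀D hg₀a
            positivity
          · intro f hf
            simp only [map_sub, map_smul, smul_eq_mul]
            rcases lt_trichotomy (f a) 0 with hfa | hfa | hfa
            · have h1 := hpair f hf g₀ hg₀D hfa hg₀a
              nlinarith
            · have := hz f hf hfa
              rw [hfa]; linarith
            · have hle := hmin f (Finset.mem_filter.mpr ⟨hf, hfa⟩)
              rw [div_le_div_iff₀ hg₀a hfa] at hle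
              nlinarith
        · by_cases hM : (D.filter (fun f => f a < 0)).Nonempty
          · obtain ⟨f₀, hf₀, hmax⟩ := Finset.exists_max_image _ (fun f => f x / f a) hM
            refine ⟨max (f₀ x / f₀ a) 0, le_max_right _ _, ?_⟩
            intro f hf
            simp only [map_sub, map_smul, smul_eq_mul]
            rcases lt_trichotomy (f a) 0 with hfa | hfa | hfa
            · have hle := hmax f (Finset.mem_filter.mpr ⟨hf, hfa⟩)
              have h1 : f x / f a ≤ max (f₀ x / f₀ a) 0 := le_trans hle (le_max_left _ _)
              rw [div_le_iff_of_neg hfa] at h1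
              linarith
            · have := hz f hf hfa
              rw [hfa]; linarith
            · exact absurd (Finset.mem_filter.mpr ⟨hf, hfa⟩) (fun h => hP ⟨f, h⟩)
          · refine ⟨0, le_refl 0, ?_⟩
            intro f hf
            simp only [map_sub, map_smul, smul_eq_mul]
            rcases lt_trichotomy (f a) 0 with hfa | hfa | hfa
            · exact absurd (Finset.mem_filter.mpr ⟨hf, hfa⟩) (fun h => hM ⟨f, h⟩)
            · have := hz f hf hfa
              rw [hfa]; linarith
            · exact absurd (Finset.mem_filter.mpr ⟨hf, hfa⟩) (fun h => hP ⟨f, h⟩)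


lemma pow_mono' {A : Type*} [Semiring A] [Algebra ℚ A] {M N : Submodule ℚ A}
    (h : M ≤ N) (p : ℕ) : M ^ p ≤ N ^ p := by
  induction p with
  | zero => simp only [pow_zero]; exact le_rfl
  | succ k ih => rw [pow_succ, pow_succ]; exact mul_le_mul' ih h

lemma extPow_mono {p : ℕ} {U W : Submodule ℚ (V n)} (h : U ≤ W) :
    extPow p U ≤ extPow p W := by
  unfold extPow
  exact pow_mono' (Submodule.map_mono h) p

/-- There is a linear `q` fixing `W` pointwise and mapping `U` into `U ⊓ W`. -/
lemma exists_proj (U W : Submodule ℚ (V n)) :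
    ∃ q : (V n) →ₗ[ℚ] (V n), (∀ w ∈ W, q w = w) ∧ (∀ u ∈ U, q u ∈ U ⊓ W) := by
  classical
  set π := W.mkQ with hπdef
  set P := U.map π with hPdef
  have hmemP : ∀ u : U, (π.comp U.subtype) u ∈ P := by
    intro u; exact ⟨u, u.2, rfl⟩
  set φ : U →ₗ[ℚ] P := LinearMap.codRestrict P (π.comp U.subtype) hmemP with hφdef
  have hφsurj : LinearMap.range φ = ⊤ := by
    rw [LinearMap.range_eq_top]
    rintro ⟨y, hy⟩
    obtain ⟨u, hu, rfl⟩ := hy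
    exact ⟨⟨u, hu⟩, Subtype.ext rfl⟩
  obtain ⟨s₀, hs₀⟩ := LinearMap.exists_rightInverse_of_surjective φ hφsurj
  obtain ⟨P', hP'⟩ := Submodule.exists_isCompl P
  set r := P.projectionOnto P' hP' with hrdef
  refine ⟨LinearMap.id - U.subtype ∘ₗ s₀ ∘ₗ r ∘ₗ π, ?_, ?_⟩
  · intro w hw
    have hw0 : π w = 0 := by
      simpa [hπdef, Submodule.Quotient.mk_eq_zero] using hw
    simp [hw0]
  · intro u hu
    have hmem : π u ∈ P := ⟨u, hu, rfl⟩
    have hru : r (π u) = ⟨π u, hmem⟩ := by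
      simpa using Submodule.projectionOnto_apply_left hP' ⟨π u, hmem⟩
    have hπs : ∀ z : P, π ((s₀ z : U) : V n) = (z : V n ⧸ W) := by
      intro z
      have h1 : φ (s₀ z) = z := by rw [← LinearMap.comp_apply, hs₀]; rfl
      have h2 : ((φ (s₀ z) : P) : V n ⧸ W) = π ((s₀ z : U) : V n) := rfl
      rw [← h2, h1]
    constructor
    · have : ((s₀ (r (π u)) : U) : V n) ∈ U := (s₀ (r (π u))).2
      exact Submodule.sub_mem U hu this
    · have : π (u - ((s₀ (r (π u)) : U) : V n)) = 0 := by
        rw [map_sub, hπs (r (π u)), hru]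
        change π u - π u = 0
        exact sub_self (π u)
      have hker : u - ((s₀ (r (π u)) : U) : V n) ∈ LinearMap.ker π := this
      rw [hπdef, Submodule.ker_mkQ] at hker
      simpa [hπdef] using hker

lemma extPow_inf (p : ℕ) (U W : Submodule ℚ (V n)) :
    extPow p (U ⊓ W) = extPow p U ⊓ extPow p W := by
  refine le_antisymm (le_inf (extPow_mono inf_le_left) (extPow_mono inf_le_right)) ?_
  obtain ⟨q, hqW, hqU⟩ := exists_proj U W
  set Φ := ExteriorAlgebra.map q with hΦdef
  intro ω hω
  obtain ⟨hωU, hωW⟩ := hω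
  -- Φ fixes everything in extPow p W
  have hfix : Φ ω = ω := by
    refine Submodule.pow_induction_on_left _ (fun r => ?_) (fun x y hx hy => ?_)
      (fun m hm x hx => ?_) hωW
    · simp [hΦdef]
    · simp [map_add, hx, hy]
    · obtain ⟨w, hw, rfl⟩ := hm
      rw [map_mul, hx, hΦdef, ExteriorAlgebra.map_apply_ι, hqW w hw]
  -- Φ maps extPow p U into extPow p (U ⊓ W)
  have hmap : Submodule.map Φ.toLinearMap (extPow p U) ≤ extPow p (U ⊓ W) := by
    simp only [extPow]
    rw [Submodule.map_pow]
    refine pow_mono' ?_ p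
    rw [← Submodule.map_comp, ExteriorAlgebra.map_comp_ι, Submodule.map_comp]
    exact Submodule.map_mono (fun x hx => by
      obtain ⟨u, hu, rfl⟩ := hx
      exact hqU u hu)
  have : Φ ω ∈ extPow p (U ⊓ W) := hmap ⟨ω, hωU, rfl⟩
  rwa [hfix] at this

lemma extPow_sInf (p : ℕ) {S : Set (Submodule ℚ (V n))} (hS : S.Nonempty) :
    extPow p (sInf S) = ⨅ W ∈ S, extPow p W := by
  classical
  -- finite subfamily attaining the infimum, via Artinian-ness
  have hwf : WellFounded ((· < ·) : Submodule ℚ (V n) → Submodule ℚ (V n) → Prop) :=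
    IsWellFounded.wf
  set C : Set (Submodule ℚ (V n)) :=
    {M | ∃ F : Finset (Submodule ℚ (V n)), (F : Set _) ⊆ S ∧ F.Nonempty ∧
      M = F.inf id} with hCdef
  have hCne : C.Nonempty := by
    obtain ⟨W, hW⟩ := hS
    exact ⟨W, {W}, by simpa using hW, ⟨W, by simp⟩, by simp⟩
  obtain ⟨M, hM, hMmin⟩ := hwf.has_min C hCne
  obtain ⟨F, hFS, hFne, rfl⟩ := hM
  -- F.inf id = sInf S
  have hle : ∀ W ∈ S, F.inf id ≤ W := by
    intro W hW
    by_contra hcon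
    have hmem : (insert W F).inf id ∈ C :=
      ⟨insert W F, by simpa using Set.insert_subset hW hFS,
        ⟨W, Finset.mem_insert_self _ _⟩, rfl⟩
    have hlt : (insert W F).inf id < F.inf id := by
      rw [Finset.inf_insert]
      exact lt_of_le_of_ne inf_le_right (fun h => hcon (h ▸ inf_le_left))
    exact hMmin _ hmem hlt
  have hsInf : sInf S = F.inf id :=
    le_antisymm (le_trans (sInf_le_sInf hFS) (le_of_eq (Finset.inf_id_eq_sInf F).symm))
      (le_sInf hle)
  -- extPow of a finite inf
  have hfin : ∀ (G : Finset (Submodule ℚ (V n))), G.Nonempty →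
      extPow p (G.inf id) = ⨅ W ∈ G, extPow p W := by
    intro G hG
    induction hG using Finset.Nonempty.cons_induction with
    | singleton W => simp
    | cons W G hWG hG ih =>
        rw [Finset.inf_cons, extPow_inf, ih, Finset.cons_eq_insert, Finset.iInf_insert, id_eq]
  refine le_antisymm ?_ ?_
  · exact le_iInf₂ fun W hW => extPow_mono (sInf_le hW)
  · calc ⨅ W ∈ S, extPow p W ≤ ⨅ W ∈ F, extPow p W := by
          refine le_iInf₂ fun W hW => ?_
          exact iInf₂_le W (hFS hW)
      _ = extPow p (F.inf id) := (hfin F hFne).symm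
      _ = extPow p (sInf S) := by rw [hsInf]


lemma exists_uniform_eps (E : Finset ((V n) →ₗ[ℚ] ℚ)) (z u : V n)
    (hz : ∀ g ∈ E, 0 < g z) : ∃ ε : ℚ, 0 < ε ∧ ∀ g ∈ E, 0 ≤ g z + ε * g u := by
  rcases E.eq_empty_or_nonempty with rfl | hne
  · exact ⟨1, one_pos, by simp⟩
  obtain ⟨g₁, hg₁, hmin⟩ := Finset.exists_min_image E (fun g => g z / (|g u| + 1)) hne
  have hεpos : 0 < g₁ z / (|g₁ u| + 1) := div_pos (hz g₁ hg₁) (by positivity)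
  refine ⟨g₁ z / (|g₁ u| + 1), hεpos, ?_⟩
  intro g hg
  have h1 : g₁ z / (|g₁ u| + 1) ≤ g z / (|g u| + 1) := hmin g hg
  have h2 : (0:ℚ) < |g u| + 1 := by positivity
  have h3 : g₁ z / (|g₁ u| + 1) * (|g u| + 1) ≤ g z := (le_div_iff₀ h2).mp h1
  have h4 : -(|g u|) ≤ g u := neg_abs_le _
  nlinarith

lemma span_coneHull_eq_top {S : Finset (V n)}
    (hfull : Submodule.span ℚ (coneHull (S : Set (V n))) = ⊤) :
    Submodule.span ℚ (S : Set (V n)) = ⊤ := by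
  rw [eq_top_iff, ← hfull]
  refine Submodule.span_le.mpr ?_
  intro x hx
  rw [mem_coneHull_fin] at hx
  obtain ⟨c, hc, rfl⟩ := hx
  exact Submodule.sum_mem _ fun v hv =>
    Submodule.smul_mem _ _ (Submodule.subset_span hv)

/-- every point not in a full-dimensional polyhedral cone is separated by a facet
half-space -/
lemma exists_facet_halfspace_not_mem {σ : Set (V n)} (hσ : IsPolyCone σ)
    (hfull : Submodule.span ℚ σ = ⊤) {x : V n} (hx : x ∉ σ) :
    ∃ θ ∈ facetsOf σ, x ∉ halfSpaceOf σ θ := by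
  classical
  obtain ⟨S, rfl⟩ := hσ
  set σ := coneHull (S : Set (V n)) with hσdef
  obtain ⟨D, hD⟩ := weyl S
  set D₁ := D.filter (fun f => f ≠ 0) with hD₁def
  have hsol1 : σ = sol D₁ := by
    rw [hσdef, hD]
    ext y
    simp only [sol, Set.mem_setOf_eq, hD₁def, Finset.mem_filter]
    constructor
    · exact fun h f hf => h f hf.1
    · intro h f hf
      by_cases hf0 : f = 0
      · simp [hf0]
      · exact h f ⟨hf, hf0⟩
  -- minimal subsystem
  have hex : ∃ k : ℕ, ∃ E : Finset ((V n) →ₗ[ℚ] ℚ), E ⊆ D₁ ∧ sol E = σ ∧ E.card = k :=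
    ⟨D₁.card, D₁, subset_rfl, hsol1.symm, rfl⟩
  obtain ⟨E, hED, hEsol, hEcard⟩ := Nat.find_spec hex
  have hmincard : ∀ E' : Finset ((V n) →ₗ[ℚ] ℚ), E' ⊆ D₁ → sol E' = σ →
      Nat.find hex ≤ E'.card := by
    intro E' h1 h2
    exact Nat.find_min' hex ⟨E', h1, h2, rfl⟩
  -- interior point
  have hspanS : Submodule.span ℚ (S : Set (V n)) = ⊤ := span_coneHull_eq_top hfull
  set y : V n := ∑ v ∈ S, v with hydef
  have hy : y ∈ σ := mem_coneHull_fin.mpr ⟨fun _ => 1, fun _ => zero_le_one, by simp [hydef]⟩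
  have hint : ∀ z : V n, ∃ ε : ℚ, 0 < ε ∧ y + ε • z ∈ σ := by
    intro z
    have hz : z ∈ Submodule.span ℚ (S : Set (V n)) := by rw [hspanS]; trivial
    obtain ⟨a, -, ha⟩ := Submodule.mem_span_finset.mp hz
    set M : ℚ := ∑ v ∈ S, |a v| with hMdef
    have hM : 0 ≤ M := Finset.sum_nonneg fun v _ => abs_nonneg _
    refine ⟨1 / (1 + M), by positivity, ?_⟩
    rw [mem_coneHull_fin]
    refine ⟨fun v => if v ∈ S then 1 + (1 / (1 + M)) * a v else 0, ?_, ?_⟩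
    · intro v
      by_cases hv : v ∈ S
      · have habs : |a v| ≤ M :=
          Finset.single_le_sum (f := fun v => |a v|) (fun w _ => abs_nonneg _) hv
        have h5 : -(|a v|) ≤ a v := neg_abs_le _
        have h6 : (0:ℚ) < 1 + M := by positivity
        have h8 : 0 < 1 / (1 + M) := by positivity
        have h7 : 1 / (1 + M) * M < 1 := by
          rw [div_mul_eq_mul_div, div_lt_one h6]; linarith
        simp only [hv, if_true]
        nlinarith
      · simp [hv]
    · have : ∀ v ∈ S, (if v ∈ S then 1 + (1 / (1 + M)) * a v else 0) • v
          = v + (1 / (1 + M)) • (a v • v) := by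
        intro v hv
        rw [if_pos hv, add_smul, one_smul, smul_smul]
      rw [Finset.sum_congr rfl this, Finset.sum_add_distrib, ← Finset.smul_sum, ha]
  -- positivity of the interior point on every nonzero functional of D₁
  have hpos : ∀ f ∈ E, 0 < f y := by
    intro f hf
    have hf1 : f ∈ D₁ := hED hf
    have hfne : f ≠ 0 := (Finset.mem_filter.mp hf1).2
    have hv : ∃ v, f v ≠ 0 := by
      by_contra hcon
      push_neg at hcon
      exact hfne (LinearMap.ext fun v => by simpa using hcon v)
    obtain ⟨v, hv⟩ := hv
    have hz : ∃ z, f z < 0 := by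
      rcases lt_trichotomy (f v) 0 with h | h | h
      · exact ⟨v, h⟩
      · exact absurd h hv
      · exact ⟨-v, by simpa using neg_lt_zero.mpr h⟩
    obtain ⟨z, hz⟩ := hz
    obtain ⟨ε, hε, hmem⟩ := hint z
    have : 0 ≤ f (y + ε • z) := by
      rw [← hEsol] at hmem; exact hmem f hf
    rw [map_add, map_smul, smul_eq_mul] at this
    nlinarith
  -- the separating functional
  have hxE : ∃ f ∈ E, f x < 0 := by
    by_contra hcon
    push_neg at hcon
    exact hx (by rw [← hEsol]; exact fun f hf => hcon f hf)
  obtain ⟨f, hfE, hfx⟩ := hxE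
  -- irredundancy witness
  have hwit : ∃ w, (∀ g ∈ E.erase f, 0 ≤ g w) ∧ f w < 0 := by
    have hEsub : σ ⊆ sol (E.erase f) := by
      intro z hz g hg
      rw [← hEsol] at hz
      exact hz g (Finset.mem_of_mem_erase hg)
    have hne2 : ¬ (sol (E.erase f) ⊆ σ) := by
      intro hss
      have heq : sol (E.erase f) = σ := le_antisymm hss hEsub
      have := hmincard (E.erase f) (Finset.Subset.trans (Finset.erase_subset f E) hED) heq
      have hcard := Finset.card_erase_of_mem hfE
      have hpos' : 1 ≤ E.card := Finset.card_pos.mpr ⟨f, hfE⟩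
      omega
    obtain ⟨w, hw1, hw2⟩ := Set.not_subset.mp hne2
    refine ⟨w, fun g hg => hw1 g hg, ?_⟩
    by_contra hcon
    push_neg at hcon
    refine hw2 ?_
    rw [← hEsol]
    intro g hg
    by_cases hgf : g = f
    · exact hgf ▸ hcon
    · exact hw1 g (Finset.mem_erase.mpr ⟨hgf, hg⟩)
  obtain ⟨w, hwge, hwlt⟩ := hwit
  have hfy : 0 < f y := hpos f hfE
  set t : ℚ := f y / (f y - f w) with htdef
  have hdenom : 0 < f y - f w := by linarith
  have ht0 : 0 < t := div_pos hfy hdenom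
  have ht1 : t < 1 := by rw [htdef, div_lt_one hdenom]; linarith
  have htc : t * (f y - f w) = f y := div_mul_cancel₀ _ (ne_of_gt hdenom)
  set z : V n := (1 - t) • y + t • w with hzdef
  have hfz : f z = 0 := by
    have : f z = (1 - t) * f y + t * f w := by
      rw [hzdef, map_add, map_smul, map_smul]; simp [smul_eq_mul]
    rw [this]; nlinarith
  have hgz : ∀ g ∈ E.erase f, 0 < g z := by
    intro g hg
    have hgy : 0 < g y := hpos g (Finset.mem_of_mem_erase hg)
    have hgw : 0 ≤ g w := hwge g hg
    have : g z = (1 - t) * g y + t * g w := by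
      rw [hzdef, map_add, map_smul, map_smul]; simp [smul_eq_mul]
    rw [this]; nlinarith
  have hzσ : z ∈ σ := by
    rw [← hEsol]
    intro g hg
    by_cases hgf : g = f
    · rw [hgf, hfz]
    · exact le_of_lt (hgz g (Finset.mem_erase.mpr ⟨hgf, hg⟩))
  -- the facet
  set θ : Set (V n) := {v ∈ σ | f v = 0} with hθdef
  have hzθ : z ∈ θ := ⟨hzσ, hfz⟩
  have hfσ : ∀ v ∈ σ, 0 ≤ f v := by
    intro v hv; rw [← hEsol] at hv; exact hv f hfE
  have hspanθ : Submodule.span ℚ θ = LinearMap.ker f := by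
    refine le_antisymm (Submodule.span_le.mpr fun v hv => hv.2) ?_
    intro u hu
    have hfu : f u = 0 := hu
    obtain ⟨ε, hε, hεmem⟩ := exists_uniform_eps (E.erase f) z u hgz
    have hmem : z + ε • u ∈ θ := by
      constructor
      · rw [← hEsol]
        intro g hg
        by_cases hgf : g = f
        · subst hgf
          rw [map_add, map_smul, hfz, hfu, smul_eq_mul]
          simp
        · have := hεmem g (Finset.mem_erase.mpr ⟨hgf, hg⟩)
          rw [map_add, map_smul, smul_eq_mul]
          linarith
      · rw [map_add, map_smul, hfz, hfu, smul_eq_mul]; simp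
    have h1 : (ε • u : V n) ∈ Submodule.span ℚ θ := by
      have : (ε • u : V n) = (z + ε • u) - z := by abel
      rw [this]
      exact Submodule.sub_mem _ (Submodule.subset_span hmem) (Submodule.subset_span hzθ)
    have := Submodule.smul_mem (Submodule.span ℚ θ) ε⁻¹ h1
    rwa [inv_smul_smul₀ (ne_of_gt hε)] at this
  have hfne : f ≠ 0 := (Finset.mem_filter.mp (hED hfE)).2
  have hrange : LinearMap.range f = ⊤ := by
    have hv : ∃ v, f v ≠ 0 := by
      by_contra hcon
      push_neg at hcon
      exact hfne (LinearMap.ext fun v => by simpa using hcon v)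
    obtain ⟨v, hv⟩ := hv
    rw [LinearMap.range_eq_top]
    intro c
    refine ⟨(c / f v) • v, ?_⟩
    rw [map_smul, smul_eq_mul, div_mul_cancel₀ _ hv]
  have hdim : coneDim θ + 1 = coneDim σ := by
    have h1 := LinearMap.finrank_range_add_finrank_ker f
    rw [hrange, finrank_top, Module.finrank_self] at h1
    have h2 : Module.finrank ℚ (V n) = n := Module.finrank_fin_fun ℚ
    have h3 : coneDim θ = Module.finrank ℚ (LinearMap.ker f) := by
      rw [coneDim, hspanθ]
    have h4 : coneDim σ = n := by
      rw [coneDim, hfull, finrank_top, h2]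
    omega
  refine ⟨θ, ⟨⟨f, hfσ, rfl⟩, hdim⟩, ?_⟩
  rintro ⟨s, hs, w', hw', hxeq⟩
  rw [hspanθ] at hw'
  have : f x = f s + f w' := by rw [hxeq, map_add]
  have hfw' : f w' = 0 := hw'
  have := hfσ s hs
  nlinarith [hfx]

/-- a point of σ lying in the span of a face lies in the face -/
lemma mem_face_of_mem_span {θ σ : Set (V n)} (hθ : IsFaceOf θ σ) {x : V n}
    (hxσ : x ∈ σ) (hx : x ∈ (Submodule.span ℚ θ : Set (V n))) : x ∈ θ := by
  obtain ⟨m, hm, rfl⟩ := hθ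
  have hker : Submodule.span ℚ {v ∈ σ | m v = 0} ≤ LinearMap.ker m :=
    Submodule.span_le.mpr fun v hv => hv.2
  exact ⟨hxσ, hker hx⟩


/-- Danilov's graded module of logarithmic `p`-forms is the intersection of
its half-space counterparts, in each integral degree `m`. -/
theorem danilov_forms_eq_intersection_of_halfspaces {n : ℕ}
    (σ : Set (V n)) (IB IC : Set (Set (V n))) (p : ℕ)
    (hσ : IsPolyCone σ) (hsc : StronglyConvex σ)
    (hfull : Submodule.span ℚ σ = ⊤)
    (hfacets : 2 ≤ (facetsOf σ).ncard)
    (hIB : IB ⊆ facetsOf σ) (hIC : IC ⊆ facetsOf σ) (hdisj : Disjoint IB IC)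
    (m : Fin n → ℤ) :
    bigOmega σ IB IC p (fun i => (m i : ℚ)) =
      ⨅ θ ∈ facetsOf σ, omegaTheta σ θ IB IC p (fun i => (m i : ℚ)) := by
  classical
  set x : V n := fun i => (m i : ℚ) with hxdef
  by_cases h1 : x ∉ σ ∨ ∃ θ ∈ IB, x ∈ θ
  · have hL : bigOmega σ IB IC p x = ⊥ := by
      simp only [bigOmega]; rw [if_pos h1]
    rw [hL]
    symm
    rw [eq_bot_iff]
    by_cases hxσ : x ∈ σ
    · rcases h1 with h | ⟨θ, hθB, hxθ⟩
      · exact absurd hxσ h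
      · have hθf : θ ∈ facetsOf σ := hIB hθB
        have hhalf : x ∈ halfSpaceOf σ θ :=
          ⟨x, hxσ, 0, Submodule.zero_mem _, (add_zero x).symm⟩
        have hspan : x ∈ (Submodule.span ℚ θ : Set (V n)) := Submodule.subset_span hxθ
        have hω : omegaTheta σ θ IB IC p x = ⊥ := by
          simp only [omegaTheta]
          rw [if_neg (not_not_intro hhalf), if_neg (not_not_intro hspan), if_pos hθB]
        exact le_trans (iInf₂_le θ hθf) (le_of_eq hω)
    · obtain ⟨θ, hθf, hnh⟩ := exists_facet_halfspace_not_mem hσ hfull hxσ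
      have hω : omegaTheta σ θ IB IC p x = ⊥ := by
        simp only [omegaTheta]; rw [if_pos hnh]
      exact le_trans (iInf₂_le θ hθf) (le_of_eq hω)
  · have hL : bigOmega σ IB IC p x =
        extPow p (⨅ θ ∈ {θ | θ ∈ facetsOf σ \ IC ∧ x ∈ θ}, Submodule.span ℚ θ) := by
      simp only [bigOmega]; rw [if_neg h1]
    push_neg at h1
    obtain ⟨hxσ, hnB⟩ := h1
    rw [hL]
    set Tset : Set (Set (V n)) := {θ | θ ∈ facetsOf σ \ IC ∧ x ∈ θ} with hTdef
    set F : Set (V n) → Submodule ℚ (V n) :=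
      fun θ => if θ ∈ Tset then Submodule.span ℚ θ else ⊤ with hFdef
    have hωeq : ∀ θ ∈ facetsOf σ, omegaTheta σ θ IB IC p x = extPow p (F θ) := by
      intro θ hθf
      have hhalf : x ∈ halfSpaceOf σ θ :=
        ⟨x, hxσ, 0, Submodule.zero_mem _, (add_zero x).symm⟩
      simp only [omegaTheta]
      rw [if_neg (not_not_intro hhalf)]
      by_cases hspan : x ∈ (Submodule.span ℚ θ : Set (V n))
      · have hxθ : x ∈ θ := mem_face_of_mem_span hθf.1 hxσ hspan
        rw [if_neg (not_not_intro hspan), if_neg (fun hB => hnB θ hB hxθ)]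
        by_cases hC : θ ∈ IC
        · rw [if_pos hC]
          have hθT : θ ∉ Tset := fun hT' => hT'.1.2 hC
          have : F θ = ⊤ := by simp only [hFdef]; rw [if_neg hθT]
          rw [this]
        · rw [if_neg hC]
          have hθT : θ ∈ Tset := ⟨⟨hθf, hC⟩, hxθ⟩
          have : F θ = Submodule.span ℚ θ := by simp only [hFdef]; rw [if_pos hθT]
          rw [this]
      · rw [if_pos hspan]
        have hθT : θ ∉ Tset := fun hT' => hspan (Submodule.subset_span hT'.2)
        have : F θ = ⊤ := by simp only [hFdef]; rw [if_neg hθT]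
        rw [this]
    have hfne : (facetsOf σ).Nonempty := by
      rcases Set.eq_empty_or_nonempty (facetsOf σ) with h | h
      · rw [h, Set.ncard_empty] at hfacets; omega
      · exact h
    have hinf : ⨅ θ ∈ Tset, Submodule.span ℚ θ = ⨅ θ ∈ facetsOf σ, F θ := by
      refine le_antisymm ?_ ?_
      · refine le_iInf₂ fun θ hθf => ?_
        by_cases hθT : θ ∈ Tset
        · refine le_trans (iInf₂_le θ hθT) (le_of_eq ?_)
          simp only [hFdef]; rw [if_pos hθT]
        · have : F θ = ⊤ := by simp only [hFdef]; rw [if_neg hθT]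
          rw [this]; exact le_top
      · refine le_iInf₂ fun θ hθT => ?_
        refine le_trans (iInf₂_le θ hθT.1.1) (le_of_eq ?_)
        simp only [hFdef]; rw [if_pos hθT]
    calc extPow p (⨅ θ ∈ Tset, Submodule.span ℚ θ)
        = extPow p (⨅ θ ∈ facetsOf σ, F θ) := by rw [hinf]
      _ = extPow p (sInf (F '' facetsOf σ)) := by rw [sInf_image]
      _ = ⨅ W ∈ F '' facetsOf σ, extPow p W := extPow_sInf p (hfne.image F)
      _ = ⨅ θ ∈ facetsOf σ, extPow p (F θ) := by rw [iInf_image]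
      _ = ⨅ θ ∈ facetsOf σ, omegaTheta σ θ IB IC p x :=
          iInf_congr fun θ => iInf_congr fun hθ => (hωeq θ hθ).symm


end ToricPaper
end
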